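/- arXiv:2209.08621 — 3 statements merged into one kernel-verified Lean document; each statement's English description precedes it below -/
import Mathlib

section
/- Let ν be an atomless probability measure on a measurable space Ω. Then there exists a family of measurable sets D_{n,k} ⊆ Ω, for n ∈ ℕ and 1 ≤ k ≤ 2^n, such that: (i) for each n, the sets D_{n,1}, …, D_{n,2^n} are pairwise disjoint and their union is Ω; (ii) ν(D_{n,k}) = 2^{-n} for every n and k; and (iii) each partition refines the previous one, namely D_{n,k} = D_{n+1, 2k-1} ∪ D_{n+1, 2k} for all n and all 1 ≤ k ≤ 2^n. -/
open MeasureTheory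
open scoped ENNReal

section Aux

variable {Ω : Type*} [MeasurableSpace Ω] (ν : Measure Ω) [IsProbabilityMeasure ν]

theorem aux_half
    (hatomless : ∀ A : Set Ω, MeasurableSet A → 0 < ν A →
      ∃ B ⊆ A, MeasurableSet B ∧ 0 < ν B ∧ ν B < ν A)
    (A : Set Ω) (hA : MeasurableSet A) (hpos : 0 < ν A) :
    ∃ B ⊆ A, MeasurableSet B ∧ 0 < ν B ∧ 2 * ν B ≤ ν A := by
  obtain ⟨B, hBA, hBm, hB0, hBlt⟩ := hatomless A hA hpos
  by_cases h : 2 * ν B ≤ ν A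
  · exact ⟨B, hBA, hBm, hB0, h⟩
  · refine ⟨A \ B, Set.diff_subset, hA.diff hBm, ?_, ?_⟩
    · have hdiff : ν (A \ B) = ν A - ν B :=
        measure_diff hBA hBm.nullMeasurableSet (measure_ne_top ν B)
      rw [hdiff]
      exact tsub_pos_of_lt hBlt
    · have hdiff : ν (A \ B) = ν A - ν B :=
        measure_diff hBA hBm.nullMeasurableSet (measure_ne_top ν B)
      have h2 : ν A ≤ 2 * ν B := le_of_not_ge h
      calc 2 * ν (A \ B) = ν (A \ B) + ν (A \ B) := two_mul _
        _ ≤ ν (A \ B) + ν B := by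
            refine add_le_add_right ?_ _
            rw [hdiff, tsub_le_iff_right, ← two_mul]
            exact h2
        _ = ν A := by rw [hdiff, tsub_add_cancel_of_le hBlt.le]

theorem aux_small
    (hatomless : ∀ A : Set Ω, MeasurableSet A → 0 < ν A →
      ∃ B ⊆ A, MeasurableSet B ∧ 0 < ν B ∧ ν B < ν A)
    (A : Set Ω) (hA : MeasurableSet A) (hpos : 0 < ν A)
    {ε : ℝ≥0∞} (hε : 0 < ε) :
    ∃ B ⊆ A, MeasurableSet B ∧ 0 < ν B ∧ ν B ≤ ε := by
  have claim : ∀ n : ℕ, ∃ B ⊆ A, MeasurableSet B ∧ 0 < ν B ∧ 2 ^ n * ν B ≤ ν A := by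
    intro n
    induction n with
    | zero => exact ⟨A, subset_rfl, hA, hpos, by simp⟩
    | succ n ih =>
      obtain ⟨B, hBA, hBm, hB0, hBle⟩ := ih
      obtain ⟨C, hCB, hCm, hC0, hCle⟩ := aux_half ν hatomless B hBm hB0
      refine ⟨C, hCB.trans hBA, hCm, hC0, ?_⟩
      calc 2 ^ (n + 1) * ν C = 2 ^ n * (2 * ν C) := by ring
        _ ≤ 2 ^ n * ν B := by exact mul_le_mul_right hCle _
        _ ≤ ν A := hBle
  obtain ⟨n, hn⟩ := ENNReal.exists_inv_two_pow_lt hε.ne'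
  obtain ⟨B, hBA, hBm, hB0, hBle⟩ := claim n
  refine ⟨B, hBA, hBm, hB0, ?_⟩
  have h1 : ν B ≤ ((2 : ℝ≥0∞) ^ n)⁻¹ := by
    rw [ENNReal.le_inv_iff_mul_le, mul_comm]
    exact hBle.trans prob_le_one
  calc ν B ≤ ((2 : ℝ≥0∞) ^ n)⁻¹ := h1
    _ = (2 : ℝ≥0∞)⁻¹ ^ n := by rw [ENNReal.inv_pow]
    _ ≤ ε := hn.le

theorem aux_sierpinski
    (hatomless : ∀ A : Set Ω, MeasurableSet A → 0 < ν A →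
      ∃ B ⊆ A, MeasurableSet B ∧ 0 < ν B ∧ ν B < ν A)
    (A : Set Ω) (hA : MeasurableSet A) {r : ℝ≥0∞} (hr : r ≤ ν A) :
    ∃ B ⊆ A, MeasurableSet B ∧ ν B = r := by
  classical
  -- key greedy choice
  have key : ∀ B : Set Ω, MeasurableSet B → B ⊆ A → ν B ≤ r →
      ∃ C, MeasurableSet C ∧ C ⊆ A \ B ∧ ν B + ν C ≤ r ∧
        ∀ C', MeasurableSet C' → C' ⊆ A \ B → ν B + ν C' ≤ r → ν C' ≤ 2 * ν C := by
    intro B hBm hBA hBr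
    set s := ⨆ (C : Set Ω) (_ : MeasurableSet C ∧ C ⊆ A \ B ∧ ν B + ν C ≤ r), ν C with hs
    have hmem_le : ∀ C', MeasurableSet C' → C' ⊆ A \ B → ν B + ν C' ≤ r → ν C' ≤ s := by
      intro C' h1 h2 h3
      exact le_iSup₂ (f := fun (C : Set Ω) (_ : MeasurableSet C ∧ C ⊆ A \ B ∧ ν B + ν C ≤ r) => ν C)
        C' ⟨h1, h2, h3⟩
    rcases eq_or_ne s 0 with h0 | h0
    · refine ⟨∅, MeasurableSet.empty, Set.empty_subset _, by simpa using hBr, ?_⟩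
      intro C' h1 h2 h3
      have := hmem_le C' h1 h2 h3
      simp [h0] at this ⊢
      simp [this]
    · have hstop : s ≠ ⊤ := by
        refine ne_top_of_le_ne_top (by simp : (1:ℝ≥0∞) ≠ ⊤) ?_
        exact iSup₂_le fun C' _ => prob_le_one
      have hhalf : s / 2 < s := ENNReal.half_lt_self h0 hstop
      rw [hs, lt_iSup_iff] at hhalf
      obtain ⟨C, hC⟩ := hhalf
      rw [lt_iSup_iff] at hC
      obtain ⟨⟨hCm, hCsub, hCr⟩, hlt⟩ := hC
      refine ⟨C, hCm, hCsub, hCr, ?_⟩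
      intro C' h1 h2 h3
      calc ν C' ≤ s := hmem_le C' h1 h2 h3
        _ = s / 2 + s / 2 := (ENNReal.add_halves s).symm
        _ ≤ ν C + ν C := add_le_add hlt.le hlt.le
        _ = 2 * ν C := (two_mul _).symm
  -- the subtype of admissible sets
  let T := {B : Set Ω // MeasurableSet B ∧ B ⊆ A ∧ ν B ≤ r}
  have key' : ∀ B : T, ∃ C, MeasurableSet C ∧ C ⊆ A \ B.1 ∧ ν B.1 + ν C ≤ r ∧
      ∀ C', MeasurableSet C' → C' ⊆ A \ B.1 → ν B.1 + ν C' ≤ r → ν C' ≤ 2 * ν C :=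
    fun B => key B.1 B.2.1 B.2.2.1 B.2.2.2
  choose Cf h1 h2 h3 h4 using key'
  let step : T → T := fun B =>
    ⟨B.1 ∪ Cf B, B.2.1.union (h1 B), Set.union_subset B.2.2.1 ((h2 B).trans Set.diff_subset),
      le_trans (measure_union_le _ _) (h3 B)⟩
  let F : ℕ → T := fun n => step^[n] ⟨∅, MeasurableSet.empty, Set.empty_subset A, by simp⟩
  have hFsucc : ∀ n, F (n + 1) = step (F n) := fun n => Function.iterate_succ_apply' _ _ _
  have hmono : Monotone fun n => (F n).1 := by
    refine monotone_nat_of_le_succ fun n => ?_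
    rw [hFsucc n]
    exact Set.subset_union_left
  set Binf := ⋃ n, (F n).1 with hBinfdef
  have hBm : MeasurableSet Binf := MeasurableSet.iUnion fun n => (F n).2.1
  have hBsubA : Binf ⊆ A := Set.iUnion_subset fun n => (F n).2.2.1
  have hBle : ν Binf ≤ r := by
    rw [hBinfdef, hmono.directed_le.measure_iUnion]
    exact iSup_le fun n => (F n).2.2.2
  rcases lt_or_eq_of_le hBle with hlt | heq
  · exfalso
    -- positive complement measure
    have hposc : 0 < ν (A \ Binf) := by
      rcases eq_or_ne (ν (A \ Binf)) 0 with h0 | h0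
      · have hsub : A ⊆ Binf ∪ (A \ Binf) := by
          intro x hx
          by_cases h : x ∈ Binf
          · exact Or.inl h
          · exact Or.inr ⟨hx, h⟩
        have : ν A ≤ ν Binf + ν (A \ Binf) :=
          (measure_mono hsub).trans (measure_union_le _ _)
        rw [h0, add_zero] at this
        exact absurd (hr.trans this) (not_le.mpr hlt)
      · exact pos_iff_ne_zero.mpr h0
    have hεpos : 0 < r - ν Binf := tsub_pos_of_lt hlt
    obtain ⟨C, hCsub, hCm, hC0, hCle⟩ := aux_small ν hatomless (A \ Binf) (hA.diff hBm) hposc hεpos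
    -- for every n, ν C ≤ 2 * ν (Cf (F n))
    have hkey : ∀ n, ν C ≤ 2 * ν (Cf (F n)) := by
      intro n
      refine h4 (F n) C hCm (hCsub.trans (Set.diff_subset_diff_right ?_)) ?_
      · exact Set.subset_iUnion (fun n => (F n).1) n
      · calc ν (F n).1 + ν C ≤ ν Binf + (r - ν Binf) :=
              add_le_add (measure_mono (Set.subset_iUnion (fun n => (F n).1) n)) hCle
          _ = r := add_tsub_cancel_of_le hlt.le
    have hhalf : ∀ n, ν C / 2 ≤ ν (Cf (F n)) := by
      intro n
      calc ν C / 2 ≤ 2 * ν (Cf (F n)) / 2 := ENNReal.div_le_div_right (hkey n) 2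
        _ = ν (Cf (F n)) := by
            rw [mul_comm, mul_div_assoc, ENNReal.div_self (by norm_num) (by norm_num), mul_one]
    -- the Cf (F n) are pairwise disjoint
    have hsubnext : ∀ n, Cf (F n) ⊆ (F (n + 1)).1 := by
      intro n
      rw [hFsucc n]
      exact Set.subset_union_right
    have hdisj : Pairwise (Function.onFun Disjoint fun n => Cf (F n)) := by
      have haux : ∀ m n : ℕ, m < n → Disjoint (Cf (F m)) (Cf (F n)) := by
        intro m n hmn
        have hsub : Cf (F m) ⊆ (F n).1 := (hsubnext m).trans (hmono (by omega))
        have : Disjoint ((F n).1) (Cf (F n)) :=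
          Set.disjoint_of_subset_right (h2 (F n)) Set.disjoint_sdiff_right
        exact Set.disjoint_of_subset_left hsub this
      intro m n hmn
      rcases lt_or_gt_of_ne hmn with h | h
      · exact haux m n h
      · exact (haux n m h).symm
    have htsum : ∑' n, ν (Cf (F n)) ≤ 1 := by
      rw [← measure_iUnion hdisj fun n => h1 (F n)]
      exact prob_le_one
    have hbot : (⊤ : ℝ≥0∞) ≤ 1 := by
      calc (⊤ : ℝ≥0∞) = ∑' _ : ℕ, ν C / 2 := by
            rw [ENNReal.tsum_const_eq_top_of_ne_zero]
            simp only [ne_eq, ENNReal.div_eq_zero_iff, not_or]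
            exact ⟨hC0.ne', by norm_num⟩
        _ ≤ ∑' n, ν (Cf (F n)) := ENNReal.tsum_le_tsum hhalf
        _ ≤ 1 := htsum
    simp at hbot
  · exact ⟨Binf, hBsubA, hBm, heq⟩

theorem aux_step
    (hatomless : ∀ A : Set Ω, MeasurableSet A → 0 < ν A →
      ∃ B ⊆ A, MeasurableSet B ∧ 0 < ν B ∧ ν B < ν A)
    (n : ℕ) (g : ℕ → Set Ω)
    (hm : ∀ k ∈ Finset.Icc 1 (2 ^ n), MeasurableSet (g k))
    (hd : ∀ k ∈ Finset.Icc 1 (2 ^ n), ∀ l ∈ Finset.Icc 1 (2 ^ n), k ≠ l →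
      Disjoint (g k) (g l))
    (hu : (⋃ k ∈ Finset.Icc 1 (2 ^ n), g k) = Set.univ)
    (hν : ∀ k ∈ Finset.Icc 1 (2 ^ n), ν (g k) = ((2 : ℝ≥0∞) ^ n)⁻¹) :
    ∃ g' : ℕ → Set Ω,
      ((∀ k ∈ Finset.Icc 1 (2 ^ (n+1)), MeasurableSet (g' k)) ∧
       (∀ k ∈ Finset.Icc 1 (2 ^ (n+1)), ∀ l ∈ Finset.Icc 1 (2 ^ (n+1)), k ≠ l →
         Disjoint (g' k) (g' l)) ∧
       ((⋃ k ∈ Finset.Icc 1 (2 ^ (n+1)), g' k) = Set.univ) ∧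
       (∀ k ∈ Finset.Icc 1 (2 ^ (n+1)), ν (g' k) = ((2 : ℝ≥0∞) ^ (n+1))⁻¹)) ∧
      (∀ k ∈ Finset.Icc 1 (2 ^ n), g k = g' (2 * k - 1) ∪ g' (2 * k)) := by
  classical
  -- half of the inverse power
  have key2 : ((2 : ℝ≥0∞) ^ (n+1))⁻¹ + ((2 : ℝ≥0∞) ^ (n+1))⁻¹ = ((2 : ℝ≥0∞) ^ n)⁻¹ := by
    rw [← two_mul, pow_succ', ENNReal.mul_inv (Or.inl two_ne_zero) (Or.inl ENNReal.ofNat_ne_top),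
      ← mul_assoc, ENNReal.mul_inv_cancel two_ne_zero ENNReal.ofNat_ne_top, one_mul]
  have hhalfpow : ((2 : ℝ≥0∞) ^ n)⁻¹ - ((2 : ℝ≥0∞) ^ (n+1))⁻¹ = ((2 : ℝ≥0∞) ^ (n+1))⁻¹ :=
    ENNReal.sub_eq_of_eq_add (ENNReal.inv_ne_top.mpr (by positivity)) key2.symm
  have hle : ((2 : ℝ≥0∞) ^ (n+1))⁻¹ ≤ ((2 : ℝ≥0∞) ^ n)⁻¹ := key2 ▸ le_self_add
  -- choose halves
  have H : ∀ k : ℕ, ∃ B, B ⊆ g k ∧ MeasurableSet B ∧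
      (k ∈ Finset.Icc 1 (2 ^ n) → ν B = ((2 : ℝ≥0∞) ^ (n+1))⁻¹) := by
    intro k
    by_cases hk : k ∈ Finset.Icc 1 (2 ^ n)
    · obtain ⟨B, hB1, hB2, hB3⟩ := aux_sierpinski ν hatomless (g k) (hm k hk)
        (r := ((2 : ℝ≥0∞) ^ (n+1))⁻¹) (by rw [hν k hk]; exact hle)
      exact ⟨B, hB1, hB2, fun _ => hB3⟩
    · exact ⟨∅, Set.empty_subset _, MeasurableSet.empty, fun h => absurd h hk⟩
  choose h hsub hmB hνB using H
  refine ⟨fun k => if k % 2 = 1 then h ((k+1)/2) else g (k/2) \ h (k/2), ?_⟩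
  set g' : ℕ → Set Ω := fun k => if k % 2 = 1 then h ((k+1)/2) else g (k/2) \ h (k/2) with hg'
  -- basic index facts
  have hodd : ∀ j, 1 ≤ j → g' (2*j - 1) = h j := by
    intro j hj
    have e : (2*j - 1 + 1)/2 = j := by omega
    simp only [hg']
    rw [if_pos (by omega), e]
  have heven : ∀ j, 1 ≤ j → g' (2*j) = g j \ h j := by
    intro j hj
    have e : (2*j)/2 = j := by omega
    simp only [hg']
    rw [if_neg (by omega), e]
  have hdecomp : ∀ k ∈ Finset.Icc 1 (2 ^ (n+1)), ∃ j ∈ Finset.Icc 1 (2 ^ n),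
      (k = 2*j - 1 ∨ k = 2*j) := by
    intro k hk
    rw [Finset.mem_Icc] at hk
    have h2 : (2:ℕ) ^ (n+1) = 2 * 2 ^ n := by ring
    refine ⟨(k+1)/2, Finset.mem_Icc.mpr (by omega), by omega⟩
  have hrefine : ∀ j ∈ Finset.Icc 1 (2 ^ n), g j = g' (2*j - 1) ∪ g' (2*j) := by
    intro j hj
    have hj1 : 1 ≤ j := (Finset.mem_Icc.mp hj).1
    rw [hodd j hj1, heven j hj1, Set.union_diff_cancel (hsub j)]
  refine ⟨⟨?_, ?_, ?_, ?_⟩, hrefine⟩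
  · -- measurability
    intro k hk
    obtain ⟨j, hj, hcase⟩ := hdecomp k hk
    have hj1 : 1 ≤ j := (Finset.mem_Icc.mp hj).1
    rcases hcase with rfl | rfl
    · rw [hodd j hj1]; exact hmB j
    · rw [heven j hj1]; exact (hm j hj).diff (hmB j)
  · -- disjointness
    intro k hk l hl hkl
    obtain ⟨j, hj, hcj⟩ := hdecomp k hk
    obtain ⟨i, hi, hci⟩ := hdecomp l hl
    have hj1 : 1 ≤ j := (Finset.mem_Icc.mp hj).1
    have hi1 : 1 ≤ i := (Finset.mem_Icc.mp hi).1
    have hsubj : ∀ m (hm1 : 1 ≤ m), (g' (2*m - 1) ⊆ g m) ∧ (g' (2*m) ⊆ g m) := by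
      intro m hm1
      rw [hodd m hm1, heven m hm1]
      exact ⟨hsub m, Set.diff_subset⟩
    by_cases hij : j = i
    · subst hij
      have : (k = 2*j - 1 ∧ l = 2*j) ∨ (k = 2*j ∧ l = 2*j - 1) := by omega
      rcases this with ⟨rfl, rfl⟩ | ⟨rfl, rfl⟩
      · rw [hodd j hj1, heven j hj1]; exact disjoint_sdiff_self_right
      · rw [hodd j hj1, heven j hj1]; exact disjoint_sdiff_self_right.symm
    · have hgd : Disjoint (g j) (g i) := hd j hj i hi hij
      have h1 : g' k ⊆ g j := by
        rcases hcj with rfl | rfl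
        · exact (hsubj j hj1).1
        · exact (hsubj j hj1).2
      have h2 : g' l ⊆ g i := by
        rcases hci with rfl | rfl
        · exact (hsubj i hi1).1
        · exact (hsubj i hi1).2
      exact Set.disjoint_of_subset h1 h2 hgd
  · -- union
    apply Set.eq_univ_of_forall
    intro x
    have hx : x ∈ ⋃ k ∈ Finset.Icc 1 (2 ^ n), g k := hu ▸ Set.mem_univ x
    simp only [Set.mem_iUnion] at hx ⊢
    obtain ⟨j, hj, hxj⟩ := hx
    have hj1 : 1 ≤ j := (Finset.mem_Icc.mp hj).1
    have hj2 : j ≤ 2 ^ n := (Finset.mem_Icc.mp hj).2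
    rw [hrefine j hj] at hxj
    have h2 : (2:ℕ) ^ (n+1) = 2 * 2 ^ n := by ring
    rcases hxj with hxo | hxe
    · exact ⟨2*j - 1, Finset.mem_Icc.mpr (by omega), hxo⟩
    · exact ⟨2*j, Finset.mem_Icc.mpr (by omega), hxe⟩
  · -- measure
    intro k hk
    obtain ⟨j, hj, hcase⟩ := hdecomp k hk
    have hj1 : 1 ≤ j := (Finset.mem_Icc.mp hj).1
    rcases hcase with rfl | rfl
    · rw [hodd j hj1]; exact hνB j hj
    · rw [heven j hj1]
      rw [measure_diff (hsub j) (hmB j).nullMeasurableSet (measure_ne_top ν _),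
        hν j hj, hνB j hj, hhalfpow]


/-- The partition property at level `n`. -/
def auxQ (n : ℕ) (g : ℕ → Set Ω) : Prop :=
  (∀ k ∈ Finset.Icc 1 (2 ^ n), MeasurableSet (g k)) ∧
  (∀ k ∈ Finset.Icc 1 (2 ^ n), ∀ l ∈ Finset.Icc 1 (2 ^ n), k ≠ l → Disjoint (g k) (g l)) ∧
  ((⋃ k ∈ Finset.Icc 1 (2 ^ n), g k) = Set.univ) ∧
  (∀ k ∈ Finset.Icc 1 (2 ^ n), ν (g k) = ((2 : ℝ≥0∞) ^ n)⁻¹)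

theorem auxQ_zero : auxQ ν 0 (fun _ => Set.univ) := by
  refine ⟨fun k _ => MeasurableSet.univ, fun k hk l hl hkl => ?_, ?_, fun k _ => ?_⟩
  · simp only [pow_zero, Finset.Icc_self, Finset.mem_singleton] at hk hl
    exact absurd (hk.trans hl.symm) hkl
  · simp [Set.eq_univ_iff_forall]
  · simp

theorem auxQ_step
    (hatomless : ∀ A : Set Ω, MeasurableSet A → 0 < ν A →
      ∃ B ⊆ A, MeasurableSet B ∧ 0 < ν B ∧ ν B < ν A)
    (n : ℕ) (g : ℕ → Set Ω) (hg : auxQ ν n g) :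
    ∃ g' : ℕ → Set Ω, auxQ ν (n + 1) g' ∧
      ∀ k ∈ Finset.Icc 1 (2 ^ n), g k = g' (2 * k - 1) ∪ g' (2 * k) :=
  aux_step ν hatomless n g hg.1 hg.2.1 hg.2.2.1 hg.2.2.2

end Aux

/-- For an atomless probability measure there is a sequence of successively refining
partitions of `Ω` into `2^n` measurable sets of equal measure `2^{-n}`. -/
theorem exists_refining_equal_measure_partitions
    {Ω : Type*} [MeasurableSpace Ω] (ν : Measure Ω) [IsProbabilityMeasure ν]
    (hatomless : ∀ A : Set Ω, MeasurableSet A → 0 < ν A →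
      ∃ B ⊆ A, MeasurableSet B ∧ 0 < ν B ∧ ν B < ν A) :
    ∃ D : ℕ → ℕ → Set Ω,
      (∀ n, ∀ k ∈ Finset.Icc 1 (2 ^ n), MeasurableSet (D n k)) ∧
      (∀ n, ∀ k ∈ Finset.Icc 1 (2 ^ n), ∀ l ∈ Finset.Icc 1 (2 ^ n), k ≠ l →
        Disjoint (D n k) (D n l)) ∧
      (∀ n, (⋃ k ∈ Finset.Icc 1 (2 ^ n), D n k) = Set.univ) ∧
      (∀ n, ∀ k ∈ Finset.Icc 1 (2 ^ n), ν (D n k) = (2 ^ n : ℝ≥0∞)⁻¹) ∧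
      (∀ n, ∀ k ∈ Finset.Icc 1 (2 ^ n),
        D n k = D (n + 1) (2 * k - 1) ∪ D (n + 1) (2 * k)) := by
  classical
  let F : ∀ _ : ℕ, {g : ℕ → Set Ω // auxQ ν _ g} := fun n =>
    Nat.rec (motive := fun n => {g : ℕ → Set Ω // auxQ ν n g})
      ⟨fun _ => Set.univ, auxQ_zero ν⟩
      (fun m p => ⟨(auxQ_step ν hatomless m p.1 p.2).choose,
        (auxQ_step ν hatomless m p.1 p.2).choose_spec.1⟩) n
  refine ⟨fun n => (F n).1, fun n => (F n).2.1, fun n => (F n).2.2.1,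
    fun n => (F n).2.2.2.1, fun n => (F n).2.2.2.2, ?_⟩
  intro n k hk
  have hrec : (F (n + 1)).1 = (auxQ_step ν hatomless n (F n).1 (F n).2).choose := rfl
  show (F n).1 k = (F (n + 1)).1 (2 * k - 1) ∪ (F (n + 1)).1 (2 * k)
  rw [hrec]
  exact (auxQ_step ν hatomless n (F n).1 (F n).2).choose_spec.2 k hk
end

section
/- Let ν be an atomless probability measure on a measurable space Ω, let C_1, …, C_m be a finite measurable partition of Ω (pairwise disjoint measurable sets whose union is Ω), and let n ∈ ℕ. Then there exists a partition of Ω into measurable sets D_1, …, D_{2^n}, pairwise disjoint with union Ω and ν(D_k) = 2^{-n} for all k, such that for every j ∈ {1, …, m}, the number of indices k with ν(D_k \ C_j) = 0 is at least ⌊2^n · ν(C_j)⌋. -/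
open MeasureTheory
open scoped ENNReal

attribute [local instance] Classical.propDecidable

section Aux

variable {Ω : Type*} [MeasurableSpace Ω] (ν : Measure Ω) [IsFiniteMeasure ν]

private lemma my_half
    (hat : ∀ A : Set Ω, MeasurableSet A → 0 < ν A →
      ∃ B ⊆ A, MeasurableSet B ∧ 0 < ν B ∧ ν B < ν A)
    {A : Set Ω} (hA : MeasurableSet A) (h0 : 0 < ν A) :
    ∃ B ⊆ A, MeasurableSet B ∧ 0 < ν B ∧ 2 * ν B ≤ ν A := by
  obtain ⟨B, hBA, hBm, hB0, hBlt⟩ := hat A hA h0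
  by_cases h : 2 * ν B ≤ ν A
  · exact ⟨B, hBA, hBm, hB0, h⟩
  · have hd : ν (A \ B) = ν A - ν B :=
      measure_diff hBA hBm.nullMeasurableSet (measure_ne_top ν B)
    refine ⟨A \ B, Set.diff_subset, hA.diff hBm, ?_, ?_⟩
    · rw [hd]
      exact tsub_pos_of_lt hBlt
    · rw [hd]
      have h1 : ν A ≤ ν B + ν B := by
        rw [← two_mul]; exact (not_le.mp h).le
      have h2 : ν A - ν B ≤ ν B := tsub_le_iff_right.mpr h1
      calc 2 * (ν A - ν B) = (ν A - ν B) + (ν A - ν B) := two_mul _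
        _ ≤ (ν A - ν B) + ν B := add_le_add_right h2 _
        _ = ν A := tsub_add_cancel_of_le hBlt.le

private lemma my_small
    (hat : ∀ A : Set Ω, MeasurableSet A → 0 < ν A →
      ∃ B ⊆ A, MeasurableSet B ∧ 0 < ν B ∧ ν B < ν A)
    {A : Set Ω} (hA : MeasurableSet A) (h0 : 0 < ν A) {ε : ℝ≥0∞} (hε : ε ≠ 0) :
    ∃ B ⊆ A, MeasurableSet B ∧ 0 < ν B ∧ ν B < ε := by
  have iter : ∀ k : ℕ, ∃ B ⊆ A, MeasurableSet B ∧ 0 < ν B ∧ 2 ^ k * ν B ≤ ν A := by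
    intro k
    induction k with
    | zero => exact ⟨A, subset_rfl, hA, h0, by simp⟩
    | succ k ih =>
      obtain ⟨B, hBA, hBm, hB0, hBk⟩ := ih
      obtain ⟨B', hB'B, hB'm, hB'0, hB'h⟩ := my_half ν hat hBm hB0
      refine ⟨B', hB'B.trans hBA, hB'm, hB'0, ?_⟩
      calc (2:ℝ≥0∞) ^ (k+1) * ν B' = 2 ^ k * (2 * ν B') := by ring
        _ ≤ 2 ^ k * ν B := mul_le_mul_right hB'h _
        _ ≤ ν A := hBk
  have hεA : ε / ν A ≠ 0 := by
    simp only [ne_eq, ENNReal.div_eq_zero_iff, not_or]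
    exact ⟨hε, measure_ne_top ν A⟩
  obtain ⟨k, hk⟩ := ENNReal.exists_inv_two_pow_lt hεA
  obtain ⟨B, hBA, hBm, hB0, hBk⟩ := iter k
  refine ⟨B, hBA, hBm, hB0, ?_⟩
  have h2k0 : (2:ℝ≥0∞) ^ k ≠ 0 := by positivity
  have h2kt : (2:ℝ≥0∞) ^ k ≠ ∞ := by
    exact ENNReal.pow_ne_top (by norm_num)
  have hB1 : ν B ≤ (2:ℝ≥0∞)⁻¹ ^ k * ν A := by
    have : ν B = (2 ^ k)⁻¹ * (2 ^ k * ν B) := by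
      rw [← mul_assoc, ENNReal.inv_mul_cancel h2k0 h2kt, one_mul]
    rw [this, ENNReal.inv_pow]
    exact mul_le_mul_right hBk _
  have hlt : (2:ℝ≥0∞)⁻¹ ^ k * ν A < ε := by
    rw [← ENNReal.lt_div_iff_mul_lt (Or.inl h0.ne') (Or.inl (measure_ne_top ν A))]
    exact hk
  exact lt_of_le_of_lt hB1 hlt

/-- Sierpiński: intermediate values for atomless finite measures. -/
private lemma my_sier
    (hat : ∀ A : Set Ω, MeasurableSet A → 0 < ν A →
      ∃ B ⊆ A, MeasurableSet B ∧ 0 < ν B ∧ ν B < ν A)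
    {A : Set Ω} (hA : MeasurableSet A) {r : ℝ≥0∞} (hr : r ≤ ν A) :
    ∃ B ⊆ A, MeasurableSet B ∧ ν B = r := by
  have hrt : r ≠ ∞ := (hr.trans_lt (measure_lt_top ν A)).ne
  -- greedy step
  have step : ∀ B : Set Ω, B ⊆ A → MeasurableSet B → ν B ≤ r →
      ∃ C, C ⊆ A \ B ∧ MeasurableSet C ∧ ν B + ν C ≤ r ∧
        ∀ C', C' ⊆ A \ B → MeasurableSet C' → ν B + ν C' ≤ r → ν C' ≤ 2 * ν C := by
    intro B hBA hBm hBr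
    set δ := ⨆ (C : Set Ω) (_ : C ⊆ A \ B ∧ MeasurableSet C ∧ ν B + ν C ≤ r), ν C with hδ
    have hmemle : ∀ C : Set Ω, C ⊆ A \ B → MeasurableSet C → ν B + ν C ≤ r → ν C ≤ δ := by
      intro C h1 h2 h3
      exact le_iSup₂_of_le C ⟨h1, h2, h3⟩ le_rfl
    by_cases hδ0 : δ = 0
    · refine ⟨∅, Set.empty_subset _, MeasurableSet.empty, by simpa using hBr, ?_⟩
      intro C' h1 h2 h3
      have h4 := (hmemle C' h1 h2 h3).trans hδ0.le
      simpa [measure_empty] using h4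
    · have hδr : δ ≤ r := by
        refine iSup₂_le ?_
        rintro C ⟨h1, h2, h3⟩
        exact le_trans le_add_self h3
      have hδt : δ ≠ ∞ := (hδr.trans_lt hrt.lt_top).ne
      have hhalf : δ / 2 < δ := ENNReal.half_lt_self hδ0 hδt
      obtain ⟨C, hCp, hC2⟩ :
          ∃ C, (C ⊆ A \ B ∧ MeasurableSet C ∧ ν B + ν C ≤ r) ∧ δ / 2 < ν C := by
        by_contra hcon
        push_neg at hcon
        have : δ ≤ δ / 2 := iSup₂_le fun C hCp => hcon C hCp
        exact absurd this (not_le.mpr hhalf)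
      refine ⟨C, hCp.1, hCp.2.1, hCp.2.2, ?_⟩
      intro C' h1 h2 h3
      calc ν C' ≤ δ := hmemle C' h1 h2 h3
        _ = 2 * (δ / 2) := (ENNReal.mul_div_cancel' (by norm_num) (by norm_num)).symm
        _ ≤ 2 * ν C := mul_le_mul_right hC2.le 2
  -- iterate the step
  have step' : ∀ s : {B : Set Ω // B ⊆ A ∧ MeasurableSet B ∧ ν B ≤ r},
      ∃ t : {B : Set Ω // B ⊆ A ∧ MeasurableSet B ∧ ν B ≤ r},
        s.1 ⊆ t.1 ∧
        ∀ C', C' ⊆ A \ s.1 → MeasurableSet C' → ν s.1 + ν C' ≤ r →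
          ν s.1 + ν C' / 2 ≤ ν t.1 := by
    rintro ⟨B, hBA, hBm, hBr⟩
    obtain ⟨C, hC1, hC2, hC3, hC4⟩ := step B hBA hBm hBr
    have hdisj : Disjoint B C := (disjoint_sdiff_self_right).mono_right hC1
    have hν : ν (B ∪ C) = ν B + ν C := measure_union hdisj hC2
    refine ⟨⟨B ∪ C, Set.union_subset hBA (hC1.trans Set.diff_subset), hBm.union hC2,
      by rw [hν]; exact hC3⟩, Set.subset_union_left, ?_⟩
    intro C' h1 h2 h3
    have h5 : ν C' ≤ 2 * ν C := hC4 C' h1 h2 h3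
    have h6 : ν C' / 2 ≤ ν C := by
      rw [ENNReal.div_le_iff_le_mul (Or.inl (by norm_num)) (Or.inl (by norm_num)),
        mul_comm]
      exact h5
    simp only [hν]
    exact add_le_add_right h6 _
  choose g hg1 hg2 using step'
  set s0 : {B : Set Ω // B ⊆ A ∧ MeasurableSet B ∧ ν B ≤ r} :=
    ⟨∅, Set.empty_subset _, MeasurableSet.empty, by simp⟩ with hs0
  set seq : ℕ → {B : Set Ω // B ⊆ A ∧ MeasurableSet B ∧ ν B ≤ r} :=
    fun k => g^[k] s0 with hseq
  have hseqsucc : ∀ k, seq (k + 1) = g (seq k) := by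
    intro k; simp [hseq, Function.iterate_succ_apply']
  have hmono : Monotone fun k => (seq k).1 := by
    apply monotone_nat_of_le_succ
    intro k
    rw [hseqsucc k]
    exact hg1 (seq k)
  set Binf : Set Ω := ⋃ k, (seq k).1 with hBinf
  have hBA' : Binf ⊆ A := Set.iUnion_subset fun k => (seq k).2.1
  have hBm' : MeasurableSet Binf := MeasurableSet.iUnion fun k => (seq k).2.2.1
  have hBval : ν Binf = ⨆ k, ν (seq k).1 :=
    (hmono.directed_le).measure_iUnion
  have hBr' : ν Binf ≤ r := by
    rw [hBval]; exact iSup_le fun k => (seq k).2.2.2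
  refine ⟨Binf, hBA', hBm', ?_⟩
  by_contra hne
  have hlt : ν Binf < r := lt_of_le_of_ne hBr' hne
  have hεne : r - ν Binf ≠ 0 := (tsub_pos_of_lt hlt).ne'
  have hdm : MeasurableSet (A \ Binf) := hA.diff hBm'
  have hdpos : 0 < ν (A \ Binf) := by
    have hd : ν (A \ Binf) = ν A - ν Binf :=
      measure_diff hBA' hBm'.nullMeasurableSet (measure_ne_top ν _)
    rw [hd]
    exact lt_of_lt_of_le (tsub_pos_of_lt hlt) (tsub_le_tsub_right hr _)
  obtain ⟨Cs, hCsub, hCm, hC0, hCε⟩ := my_small ν hat hdm hdpos hεne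
  set c : ℝ≥0∞ := ν Cs / 2 with hc
  have hc0 : c ≠ 0 := by
    simp only [hc, ne_eq, ENNReal.div_eq_zero_iff, not_or]
    exact ⟨hC0.ne', by norm_num⟩
  have hct : c ≠ ∞ := (ENNReal.div_lt_top (measure_ne_top ν Cs) (by norm_num)).ne
  have hkey : ∀ k : ℕ, ν (seq k).1 + c ≤ ν (seq (k + 1)).1 := by
    intro k
    have h1 : Cs ⊆ A \ (seq k).1 := by
      refine hCsub.trans (Set.diff_subset_diff_right ?_)
      exact Set.subset_iUnion (fun k => (seq k).1) k
    have h2 : ν (seq k).1 + ν Cs ≤ r := by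
      have hle : ν (seq k).1 ≤ ν Binf := measure_mono (Set.subset_iUnion (fun k => (seq k).1) k)
      calc ν (seq k).1 + ν Cs ≤ ν Binf + (r - ν Binf) := add_le_add hle hCε.le
        _ = r := add_tsub_cancel_of_le hlt.le
    have := hg2 (seq k) Cs h1 hCm h2
    rw [hseqsucc k]
    exact this
  have hgrow : ∀ k : ℕ, (k : ℝ≥0∞) * c ≤ ν (seq k).1 := by
    intro k
    induction k with
    | zero => simp
    | succ k ih =>
      have : ((k : ℝ≥0∞) + 1) * c = (k : ℝ≥0∞) * c + c := by ring
      push_cast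
      rw [this]
      calc (k : ℝ≥0∞) * c + c ≤ ν (seq k).1 + c := add_le_add_left ih c
        _ ≤ ν (seq (k + 1)).1 := hkey k
  obtain ⟨k, hk⟩ : ∃ k : ℕ, r < (k : ℝ≥0∞) * c := by
    obtain ⟨k, hk⟩ := ENNReal.exists_nat_gt ((ENNReal.div_lt_top hrt hc0).ne)
    refine ⟨k, ?_⟩
    rwa [ENNReal.div_lt_iff (Or.inl hc0) (Or.inl hct)] at hk
  exact absurd ((hgrow k).trans (seq k).2.2.2) (not_le.mpr hk)

/-- Split a measurable set into finitely many pieces of prescribed measures. -/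
private lemma my_split
    (hat : ∀ A : Set Ω, MeasurableSet A → 0 < ν A →
      ∃ B ⊆ A, MeasurableSet B ∧ 0 < ν B ∧ ν B < ν A)
    {ι : Type*} (s : Finset ι) (r : ι → ℝ≥0∞) :
    ∀ A : Set Ω, MeasurableSet A → (∑ i ∈ s, r i) ≤ ν A →
    ∃ E : ι → Set Ω, (∀ i, MeasurableSet (E i)) ∧ (∀ i, E i ⊆ A) ∧
      Pairwise (Function.onFun Disjoint E) ∧ (∀ i ∈ s, ν (E i) = r i) ∧
      ∀ i ∉ s, E i = ∅ := by
  classical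
  induction s using Finset.induction_on with
  | empty =>
    intro A hA _
    exact ⟨fun _ => ∅, fun _ => MeasurableSet.empty, fun _ => Set.empty_subset _,
      fun i j _ => by simp [Function.onFun], by simp, fun _ _ => rfl⟩
  | insert a s ha ih =>
    intro A hA hsum
    rw [Finset.sum_insert ha] at hsum
    have hra : r a ≤ ν A := le_trans le_self_add hsum
    obtain ⟨B, hBA, hBm, hBv⟩ := my_sier ν hat hA hra
    have hsum' : (∑ i ∈ s, r i) ≤ ν (A \ B) := by
      have hd : ν (A \ B) = ν A - ν B :=
        measure_diff hBA hBm.nullMeasurableSet (measure_ne_top ν B)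
      rw [hd, hBv]
      exact ENNReal.le_sub_of_add_le_left (ne_top_of_le_ne_top (measure_ne_top ν A) hra) hsum
    obtain ⟨E, hE1, hE2, hE3, hE4, hE5⟩ := ih (A \ B) (hA.diff hBm) hsum'
    refine ⟨fun i => if i = a then B else E i, ?_, ?_, ?_, ?_, ?_⟩
    · intro i; by_cases h : i = a <;> simp [h, hBm, hE1 i]
    · intro i; by_cases h : i = a <;>
        simp [h, hBA, (hE2 i).trans Set.diff_subset]
    · intro i j hij
      unfold Function.onFun
      dsimp only
      split_ifs with h1 h2 h2
      · exact absurd (h1.trans h2.symm) hij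
      · exact disjoint_sdiff_self_right.mono_right (hE2 j)
      · exact (disjoint_sdiff_self_right.mono_right (hE2 i)).symm
      · exact hE3 hij
    · intro i hi
      rcases Finset.mem_insert.mp hi with h | h
      · simp [h, hBv]
      · have hia : i ≠ a := fun he => ha (he ▸ h)
        simp [hia, hE4 i h]
    · intro i hi
      rw [Finset.mem_insert, not_or] at hi
      simp [hi.1, hE5 i hi.2]

end Aux

/-- For an atomless probability measure `ν` and a finite measurable partition `C_1,…,C_m`
of `Ω`, the space can be partitioned into `2^n` measurable sets of equal measure `2^{-n}`
such that, for each `j`, at least `⌊2^n ν(C_j)⌋` of the pieces are ν-essentially contained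
in `C_j`. -/
theorem exists_equal_measure_partition_adapted_to_finite_partition
    {Ω : Type*} [MeasurableSpace Ω] (ν : Measure Ω) [IsProbabilityMeasure ν]
    (hatomless : ∀ A : Set Ω, MeasurableSet A → 0 < ν A →
      ∃ B ⊆ A, MeasurableSet B ∧ 0 < ν B ∧ ν B < ν A)
    {m : ℕ} (Cpart : Fin m → Set Ω)
    (hCmeas : ∀ j, MeasurableSet (Cpart j))
    (hCdisj : Pairwise (Function.onFun Disjoint Cpart))
    (hCcover : (⋃ j, Cpart j) = Set.univ)
    (n : ℕ) :
    ∃ D : Fin (2 ^ n) → Set Ω,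
      (∀ k, MeasurableSet (D k)) ∧
      Pairwise (Function.onFun Disjoint D) ∧
      (⋃ k, D k) = Set.univ ∧
      (∀ k, ν (D k) = (2 ^ n : ℝ≥0∞)⁻¹) ∧
      ∀ j, ⌊(2 ^ n : ℝ) * (ν (Cpart j)).toReal⌋₊ ≤
        (Finset.univ.filter fun k => ν (D k \ Cpart j) = 0).card := by
  classical
  set a : Fin m → ℕ := fun j => ⌊(2 ^ n : ℝ) * (ν (Cpart j)).toReal⌋₊ with ha
  set S : Fin m → ℕ := fun j => ∑ i ∈ Finset.Iio j, a i with hS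
  set total : ℕ := ∑ j, a j with htotal
  have hStotal : ∀ j, S j + a j ≤ total := by
    intro j
    calc S j + a j = ∑ i ∈ insert j (Finset.Iio j), a i := by
          rw [Finset.sum_insert (by simp), add_comm]
      _ ≤ total := by
          rw [htotal]
          exact Finset.sum_le_sum_of_subset (Finset.subset_univ _)
  have hSmono : ∀ i j : Fin m, i < j → S i + a i ≤ S j := by
    intro i j hij
    have hsub : insert i (Finset.Iio i) ⊆ Finset.Iio j := by
      intro x hx
      rcases Finset.mem_insert.mp hx with h | h
      · simpa [h] using hij
      · exact Finset.mem_Iio.mpr ((Finset.mem_Iio.mp h).trans hij)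
    calc S i + a i = ∑ x ∈ insert i (Finset.Iio i), a x := by
          rw [Finset.sum_insert (by simp), add_comm]
      _ ≤ S j := Finset.sum_le_sum_of_subset hsub
  have hsum1 : ∑ j, ν (Cpart j) = 1 := by
    have h1 := measure_iUnion (μ := ν) hCdisj fun j => hCmeas j
    rw [hCcover, measure_univ, tsum_fintype] at h1
    exact h1.symm
  have htot : total ≤ 2 ^ n := by
    have hreal : (total : ℝ) ≤ (2 ^ n : ℝ) := by
      calc (total : ℝ) = ∑ j, (a j : ℝ) := by rw [htotal]; push_cast; rfl
        _ ≤ ∑ j, (2 ^ n : ℝ) * (ν (Cpart j)).toReal :=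
            Finset.sum_le_sum fun j _ => Nat.floor_le (by positivity)
        _ = (2 ^ n : ℝ) * ∑ j, (ν (Cpart j)).toReal := by rw [← Finset.mul_sum]
        _ = 2 ^ n := by
            rw [← ENNReal.toReal_sum (fun j _ => measure_ne_top ν _), hsum1]
            simp
    exact_mod_cast hreal
  set T : Fin m → Finset (Fin (2 ^ n)) := fun j =>
    Finset.univ.filter fun k => S j ≤ (k : ℕ) ∧ (k : ℕ) < S j + a j with hT
  have hTmem : ∀ j k, k ∈ T j ↔ (S j ≤ (k : ℕ) ∧ (k : ℕ) < S j + a j) := by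
    intro j k; simp [hT]
  have hTcard : ∀ j, (T j).card = a j := by
    intro j
    have hle : ∀ x ∈ Finset.Ico (S j) (S j + a j), x < 2 ^ n := fun x hx =>
      lt_of_lt_of_le (Finset.mem_Ico.mp hx).2 ((hStotal j).trans htot)
    have heq : T j = (Finset.Ico (S j) (S j + a j)).attachFin hle := by
      ext k
      rw [hTmem, Finset.mem_attachFin, Finset.mem_Ico]
    rw [heq, Finset.card_attachFin, Nat.card_Ico]
    omega
  have hTdisj : ∀ i j : Fin m, i ≠ j → ∀ k, k ∈ T i → k ∉ T j := by
    intro i j hij k hki hkj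
    rw [hTmem] at hki hkj
    rcases lt_or_gt_of_ne hij with h | h
    · exact absurd hkj.1 (not_le.mpr (lt_of_lt_of_le hki.2 (hSmono i j h)))
    · exact absurd hki.1 (not_le.mpr (lt_of_lt_of_le hkj.2 (hSmono j i h)))
  have hinv0 : ((2 : ℝ≥0∞) ^ n) ≠ 0 := by positivity
  have hinvt : ((2 : ℝ≥0∞) ^ n) ≠ ∞ := ENNReal.pow_ne_top (by norm_num)
  have hbound : ∀ j, (∑ k ∈ T j, ((2 : ℝ≥0∞) ^ n)⁻¹) ≤ ν (Cpart j) := by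
    intro j
    have h1 : (a j : ℝ≥0∞) ≤ 2 ^ n * ν (Cpart j) := by
      have h2 : (a j : ℝ) ≤ 2 ^ n * (ν (Cpart j)).toReal := Nat.floor_le (by positivity)
      calc (a j : ℝ≥0∞) = ENNReal.ofReal (a j) := by rw [ENNReal.ofReal_natCast]
        _ ≤ ENNReal.ofReal (2 ^ n * (ν (Cpart j)).toReal) := ENNReal.ofReal_le_ofReal h2
        _ = 2 ^ n * ν (Cpart j) := by
            rw [ENNReal.ofReal_mul (by positivity), ENNReal.ofReal_toReal (measure_ne_top ν _)]
            norm_num [ENNReal.ofReal_pow]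
    calc (∑ k ∈ T j, ((2 : ℝ≥0∞) ^ n)⁻¹) = (a j : ℝ≥0∞) * (2 ^ n)⁻¹ := by
          rw [Finset.sum_const, hTcard, nsmul_eq_mul]
      _ ≤ (2 ^ n * ν (Cpart j)) * (2 ^ n)⁻¹ := mul_le_mul_left h1 _
      _ = ν (Cpart j) := by
          rw [mul_comm ((2 : ℝ≥0∞) ^ n) (ν (Cpart j)), mul_assoc,
            ENNReal.mul_inv_cancel hinv0 hinvt, mul_one]
  have hEx : ∀ j, ∃ E : Fin (2 ^ n) → Set Ω, (∀ k, MeasurableSet (E k)) ∧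
      (∀ k, E k ⊆ Cpart j) ∧ Pairwise (Function.onFun Disjoint E) ∧
      (∀ k ∈ T j, ν (E k) = ((2 : ℝ≥0∞) ^ n)⁻¹) ∧ ∀ k ∉ T j, E k = ∅ :=
    fun j => my_split ν hatomless (T j) _ (Cpart j) (hCmeas j) (hbound j)
  choose E hE1 hE2 hE3 hE4 hE5 using hEx
  set W : Set Ω := ⋃ j, ⋃ k, E j k with hW
  have hWm : MeasurableSet W := .iUnion fun j => .iUnion fun k => hE1 j k
  have hEW : ∀ j k, E j k ⊆ W := fun j k =>
    (Set.subset_iUnion (fun k' => E j k') k).trans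
      (Set.subset_iUnion (fun j' => ⋃ k', E j' k') j)
  have hWle : ν W ≤ (total : ℝ≥0∞) * (2 ^ n)⁻¹ := by
    calc ν W ≤ ∑ j, ν (⋃ k, E j k) := measure_iUnion_fintype_le ν _
      _ ≤ ∑ j, ∑ k, ν (E j k) := Finset.sum_le_sum fun j _ => measure_iUnion_fintype_le ν _
      _ = ∑ j, (a j : ℝ≥0∞) * (2 ^ n)⁻¹ := by
          refine Finset.sum_congr rfl fun j _ => ?_
          rw [← Finset.sum_subset (Finset.subset_univ (T j))
            (fun k _ hk => by rw [hE5 j k hk, measure_empty])]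
          rw [Finset.sum_congr rfl (fun k hk => hE4 j k hk), Finset.sum_const, hTcard,
            nsmul_eq_mul]
      _ = (total : ℝ≥0∞) * (2 ^ n)⁻¹ := by
          rw [← Finset.sum_mul, ← Nat.cast_sum, ← htotal]
  set Tnone : Finset (Fin (2 ^ n)) := Finset.univ.filter (fun k => ∀ j, k ∉ T j) with hTn
  have hTnmem : ∀ k, k ∈ Tnone ↔ ∀ j, k ∉ T j := by intro k; simp [hTn]
  have hcards : Tnone.card + total ≤ 2 ^ n := by
    have h1 : (Finset.univ.biUnion T).card = total := by
      rw [Finset.card_biUnion fun i _ j _ hij => Finset.disjoint_left.mpr (hTdisj i j hij),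
        htotal]
      exact Finset.sum_congr rfl fun j _ => hTcard j
    have h2 : Disjoint Tnone (Finset.univ.biUnion T) := by
      rw [Finset.disjoint_left]
      intro k hk hk'
      obtain ⟨j, _, hj⟩ := Finset.mem_biUnion.mp hk'
      exact (hTnmem k).mp hk j hj
    calc Tnone.card + total = (Tnone ∪ Finset.univ.biUnion T).card := by
          rw [Finset.card_union_of_disjoint h2, h1]
      _ ≤ (Finset.univ : Finset (Fin (2 ^ n))).card :=
          Finset.card_le_card (Finset.subset_univ _)
      _ = 2 ^ n := by simp
  have hWc : MeasurableSet Wᶜ := hWm.compl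
  have hboundc : (∑ k ∈ Tnone, ((2 : ℝ≥0∞) ^ n)⁻¹) ≤ ν Wᶜ := by
    rw [prob_compl_eq_one_sub hWm]
    have h1 : (Tnone.card : ℝ≥0∞) * (2 ^ n)⁻¹ + (total : ℝ≥0∞) * (2 ^ n)⁻¹ ≤ 1 := by
      rw [← add_mul]
      calc ((Tnone.card : ℝ≥0∞) + total) * (2 ^ n)⁻¹
          ≤ (2 ^ n : ℝ≥0∞) * (2 ^ n)⁻¹ := by
            refine mul_le_mul_left ?_ _
            have h := Nat.cast_le (α := ℝ≥0∞) |>.mpr hcards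
            push_cast at h
            exact h
        _ = 1 := ENNReal.mul_inv_cancel hinv0 hinvt
    rw [Finset.sum_const, nsmul_eq_mul]
    calc (Tnone.card : ℝ≥0∞) * (2 ^ n)⁻¹ ≤ 1 - (total : ℝ≥0∞) * (2 ^ n)⁻¹ :=
        ENNReal.le_sub_of_add_le_right
          (ENNReal.mul_ne_top (ENNReal.natCast_ne_top _) (ENNReal.inv_ne_top.mpr hinv0)) h1
      _ ≤ 1 - ν W := tsub_le_tsub_left hWle 1
  obtain ⟨F, hF1, hF2, hF3, hF4, hF5⟩ :=
    my_split ν hatomless Tnone _ Wᶜ hWc hboundc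
  set D' : Fin (2 ^ n) → Set Ω := fun k => (⋃ j, E j k) ∪ F k with hD'
  have hD'm : ∀ k, MeasurableSet (D' k) := fun k =>
    ((MeasurableSet.iUnion fun j => hE1 j k).union (hF1 k))
  have hD'disj : Pairwise (Function.onFun Disjoint D') := by
    intro k k' hkk'
    unfold Function.onFun
    simp only [hD']
    refine Set.disjoint_union_left.mpr ⟨?_, ?_⟩
    · refine Set.disjoint_union_right.mpr ⟨?_, ?_⟩
      · rw [Set.disjoint_iUnion_left]
        intro j
        rw [Set.disjoint_iUnion_right]
        intro j'
        by_cases hjj : j' = j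
        · subst hjj; exact hE3 j' hkk'
        · exact (hCdisj (Ne.symm hjj)).mono (hE2 j k) (hE2 j' k')
      · exact disjoint_compl_right.mono (Set.iUnion_subset fun j => hEW j k) (hF2 k')
    · refine Set.disjoint_union_right.mpr ⟨?_, ?_⟩
      · exact (disjoint_compl_right.mono (Set.iUnion_subset fun j => hEW j k') (hF2 k)).symm
      · exact hF3 hkk'
  have hmemk : ∀ k, (∃ j, k ∈ T j) ∨ k ∈ Tnone := by
    intro k
    by_cases h : ∃ j, k ∈ T j
    · exact Or.inl h
    · push_neg at h
      exact Or.inr ((hTnmem k).mpr h)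
  have hD'in : ∀ j k, k ∈ T j → D' k = E j k := by
    intro j k hk
    have hF : F k = ∅ := hF5 k (fun hmem => (hTnmem k).mp hmem j hk)
    have hU : (⋃ j', E j' k) = E j k := by
      apply subset_antisymm
      · apply Set.iUnion_subset
        intro j'
        by_cases hj : j' = j
        · subst hj; exact subset_rfl
        · rw [hE5 j' k (hTdisj j j' (Ne.symm hj) k hk)]
          exact Set.empty_subset _
      · exact Set.subset_iUnion (fun j' => E j' k) j
    simp only [hD', hU, hF, Set.union_empty]
  have hD'meas : ∀ k, ν (D' k) = ((2 : ℝ≥0∞) ^ n)⁻¹ := by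
    intro k
    rcases hmemk k with ⟨j, hk⟩ | hk
    · rw [hD'in j k hk]; exact hE4 j k hk
    · have hU : (⋃ j', E j' k) = ∅ := by
        simp only [Set.iUnion_eq_empty]
        exact fun j => hE5 j k ((hTnmem k).mp hk j)
      simp only [hD', hU, Set.empty_union]
      exact hF4 k hk
  have hD'un : ν (⋃ k, D' k) = 1 := by
    rw [measure_iUnion hD'disj hD'm, tsum_fintype]
    rw [Finset.sum_congr rfl fun k _ => hD'meas k, Finset.sum_const]
    simp only [Finset.card_univ, Fintype.card_fin, nsmul_eq_mul]
    rw [show ((2 ^ n : ℕ) : ℝ≥0∞) = (2 : ℝ≥0∞) ^ n by push_cast; rfl]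
    exact ENNReal.mul_inv_cancel hinv0 hinvt
  set R : Set Ω := (⋃ k, D' k)ᶜ with hR
  have hRm : MeasurableSet R := (MeasurableSet.iUnion hD'm).compl
  have hR0 : ν R = 0 := by
    rw [hR, prob_compl_eq_one_sub (MeasurableSet.iUnion hD'm), hD'un, tsub_self]
  set k0 : Fin (2 ^ n) := ⟨0, by positivity⟩ with hk0
  set D : Fin (2 ^ n) → Set Ω := fun k => if k = k0 then D' k ∪ R else D' k with hD
  have hDsub : ∀ k, D k ⊆ D' k ∪ R := by
    intro k
    simp only [hD]
    split_ifs
    exacts [subset_rfl, Set.subset_union_left]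
  refine ⟨D, ?_, ?_, ?_, ?_, ?_⟩
  · intro k
    simp only [hD]
    split_ifs
    exacts [(hD'm k).union hRm, hD'm k]
  · intro k k' hkk'
    unfold Function.onFun
    simp only [hD]
    have hbase := hD'disj hkk'
    have hRD : ∀ k'', Disjoint R (D' k'') := fun k'' =>
      disjoint_compl_left.mono_right (Set.subset_iUnion D' k'')
    split_ifs with h1 h2 h2
    · exact absurd (h1.trans h2.symm) hkk'
    · exact Set.disjoint_union_left.mpr ⟨hbase, hRD k'⟩
    · exact Set.disjoint_union_right.mpr ⟨hbase, (hRD k).symm⟩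
    · exact hbase
  · apply Set.eq_univ_of_forall
    intro x
    by_cases hx : x ∈ ⋃ k, D' k
    · obtain ⟨k, hk⟩ := Set.mem_iUnion.mp hx
      refine Set.mem_iUnion.mpr ⟨k, ?_⟩
      simp only [hD]
      split_ifs
      · exact Set.mem_union_left _ hk
      · exact hk
    · refine Set.mem_iUnion.mpr ⟨k0, ?_⟩
      simp only [hD]
      split_ifs with h
      · exact Set.mem_union_right _ hx
      · exact (h trivial).elim
  · intro k
    simp only [hD]
    split_ifs with h
    · refine le_antisymm ?_ ?_
      · calc ν (D' k ∪ R) ≤ ν (D' k) + ν R := measure_union_le _ _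
          _ = ((2 : ℝ≥0∞) ^ n)⁻¹ := by rw [hD'meas k, hR0, add_zero]
      · calc ((2 : ℝ≥0∞) ^ n)⁻¹ = ν (D' k) := (hD'meas k).symm
          _ ≤ ν (D' k ∪ R) := measure_mono Set.subset_union_left
    · exact hD'meas k
  · intro j
    show a j ≤ _
    rw [← hTcard j]
    apply Finset.card_le_card
    intro k hk
    simp only [Finset.mem_filter, Finset.mem_univ, true_and]
    have hsub : D k \ Cpart j ⊆ R := by
      have h2 : D' k ⊆ Cpart j := by
        rw [hD'in j k hk]; exact hE2 j k
      intro x hx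
      rcases hDsub k hx.1 with h | h
      · exact absurd (h2 h) hx.2
      · exact h
    exact measure_mono_null hsub hR0
end

section
/- Let (C, μ) be a measure space and ψ ∈ L²(C, μ; ℂ) with ‖ψ‖_{L²} = 1, and define ν(A) := ∫_A |ψ|² dμ for measurable A ⊆ C; assume ν is atomless. Let (C_j)_{j ∈ ℕ} be a countable measurable partition of C. Then there exists a family of measurable sets D_{n,k} ⊆ C (n ∈ ℕ, 1 ≤ k ≤ 2^n) with: (i) for each n the sets D_{n,1}, …, D_{n,2^n} pairwise disjoint with union C and ν(D_{n,k}) = 2^{-n}; (ii) D_{n,k} = D_{n+1,2k-1} ∪ D_{n+1,2k}; and such that, writing M_{n,j} := {k : ν(D_{n,k} \ C_j) = 0}, for every j both: (a) lim_{n→∞} 2^{-n} · #M_{n,j} = ∫_{C_j} |ψ|² dμ, and (b) lim_{n→∞} ‖ Σ_{k ∈ M_{n,j}} 1_{D_{n,k}} · ψ − 1_{C_j} · ψ ‖_{L²(C,μ;ℂ)} = 0. (The Born probability of each outcome is the limiting fraction of equal-weight cells consistent with that outcome.) -/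
open MeasureTheory Filter
open scoped ENNReal

attribute [local instance] Classical.propDecidable

namespace BornCounting

variable {C : Type*} [MeasurableSpace C]

def AtomlessProp (ρ : Measure C) : Prop :=
  ∀ A : Set C, MeasurableSet A → 0 < ρ A →
    ∃ B ⊆ A, MeasurableSet B ∧ 0 < ρ B ∧ ρ B < ρ A

def SierpProp (ρ : Measure C) : Prop :=
  ∀ A : Set C, MeasurableSet A → ∀ r ≤ ρ A, ∃ B, B ⊆ A ∧ MeasurableSet B ∧ ρ B = r

lemma small_sets (ρ : Measure C) [IsFiniteMeasure ρ] (hat : AtomlessProp ρ)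
    (A : Set C) (hA : MeasurableSet A) (hpos : 0 < ρ A) (n : ℕ) :
    ∃ B, B ⊆ A ∧ MeasurableSet B ∧ 0 < ρ B ∧ ρ B ≤ ρ A / 2 ^ n := by
  induction n with
  | zero => exact ⟨A, subset_rfl, hA, hpos, by simp⟩
  | succ n ih =>
    obtain ⟨B, hBA, hBm, hBpos, hBle⟩ := ih
    obtain ⟨E, hEB, hEm, hEpos, hElt⟩ := hat B hBm hBpos
    have hdiff : ρ (B \ E) = ρ B - ρ E :=
      measure_diff hEB hEm.nullMeasurableSet (measure_ne_top ρ E)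
    have hhalf : ρ A / 2 ^ n / 2 ≤ ρ A / 2 ^ (n + 1) := by
      rw [pow_succ, div_eq_mul_inv, div_eq_mul_inv, div_eq_mul_inv,
        ENNReal.mul_inv (by simp) (by simp), mul_assoc]
    by_cases hE2 : ρ E ≤ ρ B / 2
    · exact ⟨E, hEB.trans hBA, hEm, hEpos,
        hE2.trans ((ENNReal.div_le_div_right hBle 2).trans hhalf)⟩
    · push_neg at hE2
      refine ⟨B \ E, (Set.diff_subset).trans hBA, hBm.diff hEm, ?_, ?_⟩
      · rw [hdiff]
        exact tsub_pos_iff_lt.mpr hElt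
      · rw [hdiff]
        have : ρ B - ρ E ≤ ρ B - ρ B / 2 := tsub_le_tsub_left hE2.le _
        have h2 : ρ B - ρ B / 2 ≤ ρ B / 2 := by
          rw [ENNReal.sub_half (measure_ne_top ρ B)]
        exact (this.trans h2).trans ((ENNReal.div_le_div_right hBle 2).trans hhalf)
      

lemma exists_small (ρ : Measure C) [IsFiniteMeasure ρ] (hat : AtomlessProp ρ)
    (A : Set C) (hA : MeasurableSet A) (hpos : 0 < ρ A) (ε : ℝ≥0∞) (hε : 0 < ε) :
    ∃ B, B ⊆ A ∧ MeasurableSet B ∧ 0 < ρ B ∧ ρ B ≤ ε := by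
  by_cases hle : ρ A ≤ ε
  · exact ⟨A, subset_rfl, hA, hpos, hle⟩
  · push_neg at hle
    have hAne : ρ A ≠ 0 := hpos.ne'
    have hAtop : ρ A ≠ ∞ := measure_ne_top ρ A
    have hdiv : ε / ρ A ≠ 0 := by
      simp [ENNReal.div_eq_zero_iff, hε.ne', hAtop]
    obtain ⟨m, hm⟩ := ENNReal.exists_inv_two_pow_lt hdiv
    obtain ⟨B, hBA, hBm, hBpos, hBle⟩ := small_sets ρ hat A hA hpos m
    refine ⟨B, hBA, hBm, hBpos, hBle.trans ?_⟩
    have h1 : ρ A / 2 ^ m = ρ A * (2⁻¹ : ℝ≥0∞) ^ m := by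
      rw [div_eq_mul_inv, ENNReal.inv_pow]
    rw [h1]
    calc ρ A * (2⁻¹ : ℝ≥0∞) ^ m ≤ ρ A * (ε / ρ A) := by
          exact mul_le_mul_right hm.le _
      _ = ε := by
          rw [ENNReal.mul_div_cancel hAne hAtop]

lemma sierp (ρ : Measure C) [IsFiniteMeasure ρ] (hat : AtomlessProp ρ) : SierpProp ρ := by
  intro A hA r hr
  have hrtop : r ≠ ∞ := (hr.trans_lt (measure_lt_top ρ A)).ne
  classical
  -- admissible states
  let X := {S : Set C // MeasurableSet S ∧ S ⊆ A ∧ ρ S ≤ r}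
  let V : Set C → Set ℝ≥0∞ := fun S =>
    {v | ∃ E, MeasurableSet E ∧ E ⊆ A \ S ∧ ρ S + ρ E ≤ r ∧ ρ E = v}
  have hVle : ∀ S : Set C, sSup (V S) ≤ r := by
    intro S
    refine sSup_le ?_
    rintro v ⟨E, -, -, hle, rfl⟩
    exact le_trans le_add_self hle
  have exStep : ∀ S : X, ∃ E, MeasurableSet E ∧ E ⊆ A \ S.1 ∧ ρ S.1 + ρ E ≤ r ∧
      sSup (V S.1) ≤ 2 * ρ E := by
    intro S
    by_cases h0 : sSup (V S.1) = 0
    · exact ⟨∅, MeasurableSet.empty, Set.empty_subset _, by simpa using S.2.2.2, by simp [h0]⟩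
    · have hfin : sSup (V S.1) ≠ ∞ := ((hVle S.1).trans_lt hrtop.lt_top).ne
      have hlt : sSup (V S.1) / 2 < sSup (V S.1) := ENNReal.half_lt_self h0 hfin
      obtain ⟨v, hv, hltv⟩ := lt_sSup_iff.mp hlt
      obtain ⟨E, hEm, hEs, hEle, rfl⟩ := hv
      refine ⟨E, hEm, hEs, hEle, ?_⟩
      calc sSup (V S.1) = sSup (V S.1) / 2 + sSup (V S.1) / 2 := (ENNReal.add_halves _).symm
        _ ≤ ρ E + ρ E := add_le_add hltv.le hltv.le
        _ = 2 * ρ E := (two_mul _).symm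
  let step : X → X := fun S =>
    ⟨S.1 ∪ (exStep S).choose, by
      obtain ⟨hEm, hEs, hEle, -⟩ := (exStep S).choose_spec
      refine ⟨S.2.1.union hEm, Set.union_subset S.2.2.1 (hEs.trans Set.diff_subset), ?_⟩
      rw [measure_union (Set.disjoint_of_subset_right hEs Set.disjoint_sdiff_right) hEm]
      exact hEle⟩
  let g : ℕ → X := fun n => step^[n] ⟨∅, MeasurableSet.empty, Set.empty_subset _, by simp⟩
  have hg_succ : ∀ n, g (n + 1) = step (g n) := by
    intro n
    simp only [g, Function.iterate_succ_apply']
  have hg_meas : ∀ n, ρ (g (n+1)).1 = ρ (g n).1 + ρ (exStep (g n)).choose := by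
    intro n
    rw [hg_succ n]
    obtain ⟨hEm, hEs, hEle, -⟩ := (exStep (g n)).choose_spec
    exact measure_union (Set.disjoint_of_subset_right hEs Set.disjoint_sdiff_right) hEm
  have hg_mono : Monotone fun n => (g n).1 := by
    refine monotone_nat_of_le_succ ?_
    intro n
    rw [hg_succ n]
    exact Set.subset_union_left
  set B : Set C := ⋃ n, (g n).1 with hB
  have hBm : MeasurableSet B := MeasurableSet.iUnion fun n => (g n).2.1
  have hBA : B ⊆ A := Set.iUnion_subset fun n => (g n).2.2.1
  have hBsup : ρ B = ⨆ n, ρ (g n).1 :=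
    Directed.measure_iUnion (Monotone.directed_le hg_mono)
  have hBr : ρ B ≤ r := by
    rw [hBsup]; exact iSup_le fun n => (g n).2.2.2
  refine ⟨B, hBA, hBm, ?_⟩
  by_contra hne
  have hBlt : ρ B < r := lt_of_le_of_ne hBr hne
  have hεpos : 0 < r - ρ B := tsub_pos_iff_lt.mpr hBlt
  have hABm : MeasurableSet (A \ B) := hA.diff hBm
  have hABpos : 0 < ρ (A \ B) := by
    have h1 : ρ (A \ B) = ρ A - ρ B := measure_diff hBA hBm.nullMeasurableSet (measure_ne_top ρ B)
    rw [h1]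
    exact lt_of_lt_of_le hεpos (tsub_le_tsub_right hr _)
  obtain ⟨E, hEAB, hEm, hEpos, hEle⟩ := exists_small ρ hat (A \ B) hABm hABpos _ hεpos
  -- E is admissible at every stage
  have hEV : ∀ n, ρ E ∈ V (g n).1 := by
    intro n
    refine ⟨E, hEm, ?_, ?_, rfl⟩
    · exact hEAB.trans (Set.diff_subset_diff_right (Set.subset_iUnion (fun n => (g n).1) n))
    · calc ρ (g n).1 + ρ E ≤ ρ B + (r - ρ B) :=
            add_le_add (measure_mono (Set.subset_iUnion (fun n => (g n).1) n)) hEle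
        _ = r := by rw [add_comm, tsub_add_cancel_of_le hBlt.le]
  have key : ∀ n : ℕ, (n : ℝ≥0∞) * ρ E ≤ 2 * ρ (g n).1 := by
    intro n
    induction n with
    | zero => simp
    | succ n ih =>
      have h1 : ρ E ≤ 2 * ρ (exStep (g n)).choose :=
        le_trans (le_sSup (hEV n)) (exStep (g n)).choose_spec.2.2.2
      rw [hg_meas n]
      push_cast
      rw [add_mul, one_mul, mul_add]
      exact add_le_add ih h1
  have hEne : ρ E ≠ 0 := hEpos.ne'
  have hEtop : ρ E ≠ ∞ := measure_ne_top ρ E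
  have hdivtop : 2 * r / ρ E ≠ ∞ := by
    simp [ENNReal.div_eq_top, hEne, ENNReal.mul_ne_top, hrtop]
  obtain ⟨n, hn⟩ := ENNReal.exists_nat_gt hdivtop
  have h2 : 2 * r < n * ρ E := (ENNReal.div_lt_iff (Or.inl hEne) (Or.inl hEtop)).mp hn
  have h3 : (n : ℝ≥0∞) * ρ E ≤ 2 * r := (key n).trans (mul_le_mul_right (g n).2.2.2 2)
  exact absurd (h2.trans_le h3) (lt_irrefl _)


noncomputable def halfSet (ρ : Measure C) (hs : SierpProp ρ) (S : Set C) : Set C :=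
  if h : MeasurableSet S then (hs S h (ρ S / 2) ENNReal.half_le_self).choose else ∅

lemma halfSet_spec (ρ : Measure C) (hs : SierpProp ρ) (S : Set C) (h : MeasurableSet S) :
    halfSet ρ hs S ⊆ S ∧ MeasurableSet (halfSet ρ hs S) ∧ ρ (halfSet ρ hs S) = ρ S / 2 := by
  rw [halfSet, dif_pos h]
  exact (hs S h (ρ S / 2) ENNReal.half_le_self).choose_spec

noncomputable def dyadicFam (ρ : Measure C) (hs : SierpProp ρ) (A : Set C) : ℕ → ℕ → Set C
  | 0 => fun i => if i = 0 then ∅ else A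
  | (n + 1) => fun i =>
      if i % 2 = 0 then dyadicFam ρ hs A n (i / 2)
      else dyadicFam ρ hs A n (i / 2) ∪
        halfSet ρ hs (dyadicFam ρ hs A n (i / 2 + 1) \ dyadicFam ρ hs A n (i / 2))

variable (ρ : Measure C) (hs : SierpProp ρ) (A : Set C)

lemma dy_even (n k : ℕ) : dyadicFam ρ hs A (n + 1) (2 * k) = dyadicFam ρ hs A n k := by
  have h1 : (2 * k) % 2 = 0 := Nat.mul_mod_right 2 k
  have h2 : (2 * k) / 2 = k := Nat.mul_div_cancel_left k (by norm_num)
  simp [dyadicFam, h1, h2]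

lemma dy_odd (n k : ℕ) : dyadicFam ρ hs A (n + 1) (2 * k + 1) =
    dyadicFam ρ hs A n k ∪
      halfSet ρ hs (dyadicFam ρ hs A n (k + 1) \ dyadicFam ρ hs A n k) := by
  have h1 : (2 * k + 1) % 2 = 1 := by omega
  have h2 : (2 * k + 1) / 2 = k := by omega
  simp [dyadicFam, h1, h2]

lemma dy_meas (hA : MeasurableSet A) : ∀ n i, MeasurableSet (dyadicFam ρ hs A n i) := by
  intro n
  induction n with
  | zero =>
    intro i
    by_cases h : i = 0 <;> simp [dyadicFam, h, hA]
  | succ n ih =>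
    intro i
    rcases Nat.even_or_odd' i with ⟨k, hk | hk⟩ <;> subst hk
    · rw [dy_even]; exact ih k
    · rw [dy_odd]
      exact (ih k).union (halfSet_spec ρ hs _ ((ih (k+1)).diff (ih k))).2.1

lemma dy_zero : ∀ n, dyadicFam ρ hs A n 0 = ∅ := by
  intro n
  induction n with
  | zero => simp [dyadicFam]
  | succ n ih =>
    have := dy_even ρ hs A n 0
    simpa [ih] using this

lemma dy_mono_succ (hA : MeasurableSet A) : ∀ n i,
    dyadicFam ρ hs A n i ⊆ dyadicFam ρ hs A n (i + 1) := by
  intro n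
  induction n with
  | zero =>
    intro i
    by_cases h : i = 0 <;> simp [dyadicFam, h]
  | succ n ih =>
    intro i
    rcases Nat.even_or_odd' i with ⟨k, hk | hk⟩ <;> subst hk
    · rw [dy_even, dy_odd]
      exact Set.subset_union_left
    · have h1 : 2 * k + 1 + 1 = 2 * (k + 1) := by ring
      rw [dy_odd, h1, dy_even]
      refine Set.union_subset (ih k) ?_
      exact ((halfSet_spec ρ hs _ ((dy_meas ρ hs A hA n (k+1)).diff
        (dy_meas ρ hs A hA n k))).1).trans Set.diff_subset

lemma dy_mono (hA : MeasurableSet A) (n : ℕ) : Monotone (dyadicFam ρ hs A n) :=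
  monotone_nat_of_le_succ (dy_mono_succ ρ hs A hA n)

lemma dy_top (hA : MeasurableSet A) : ∀ n i, 2 ^ n ≤ i → dyadicFam ρ hs A n i = A := by
  intro n
  induction n with
  | zero =>
    intro i hi
    have : i ≠ 0 := by omega
    simp [dyadicFam, this]
  | succ n ih =>
    intro i hi
    rcases Nat.even_or_odd' i with ⟨k, hk | hk⟩ <;> subst hk
    · rw [dy_even]
      exact ih k (by omega)
    · have hk1 : 2 ^ n ≤ k := by
        have : 2 ^ (n+1) = 2 * 2 ^ n := by ring
        omega
      rw [dy_odd, ih k hk1, ih (k+1) (by omega)]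
      have : halfSet ρ hs (A \ A) ⊆ A \ A :=
        (halfSet_spec ρ hs _ (hA.diff hA)).1
      rw [Set.union_eq_self_of_subset_right (this.trans (by simp))]

lemma dy_subset (hA : MeasurableSet A) (n i : ℕ) : dyadicFam ρ hs A n i ⊆ A := by
  calc dyadicFam ρ hs A n i ⊆ dyadicFam ρ hs A n (max i (2^n)) :=
        dy_mono ρ hs A hA n (le_max_left _ _)
    _ = A := dy_top ρ hs A hA n _ (le_max_right _ _)

lemma dy_consist (hA : MeasurableSet A) (n : ℕ) (i : ℕ) :
    ∀ m, dyadicFam ρ hs A (n + m) (i * 2 ^ m) = dyadicFam ρ hs A n i := by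
  intro m
  induction m with
  | zero => simp
  | succ m ih =>
    have h1 : i * 2 ^ (m + 1) = 2 * (i * 2 ^ m) := by ring
    have h2 : n + (m + 1) = (n + m) + 1 := by ring
    rw [h2, h1, dy_even, ih]

lemma dy_measure [IsFiniteMeasure ρ] (hA : MeasurableSet A) :
    ∀ n i, i ≤ 2 ^ n → ρ (dyadicFam ρ hs A n i) = i * ρ A / 2 ^ n := by
  intro n
  induction n with
  | zero =>
    intro i hi
    interval_cases i <;> simp [dyadicFam]
  | succ n ih =>
    intro i hi
    rcases Nat.even_or_odd' i with ⟨k, hk | hk⟩ <;> subst hk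
    · rw [dy_even, ih k (by omega)]
      have h2 : ((2 * k : ℕ) : ℝ≥0∞) = 2 * (k : ℝ≥0∞) := by push_cast; ring
      rw [h2, pow_succ, mul_comm ((2:ℝ≥0∞)^n) 2, mul_assoc,
        ENNReal.mul_div_mul_left _ _ (by norm_num) (by norm_num)]
    · have hk2 : k + 1 ≤ 2 ^ n := by
        have : 2 ^ (n+1) = 2 * 2 ^ n := by ring
        omega
      have hkle : k ≤ 2 ^ n := by omega
      have hdm : MeasurableSet (dyadicFam ρ hs A n (k+1) \ dyadicFam ρ hs A n k) :=
        (dy_meas ρ hs A hA n (k+1)).diff (dy_meas ρ hs A hA n k)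
      obtain ⟨hsub, hm, hval⟩ := halfSet_spec ρ hs _ hdm
      rw [dy_odd]
      have hdisj : Disjoint (dyadicFam ρ hs A n k)
          (halfSet ρ hs (dyadicFam ρ hs A n (k+1) \ dyadicFam ρ hs A n k)) :=
        Set.disjoint_of_subset_right hsub Set.disjoint_sdiff_right
      rw [measure_union hdisj hm, hval,
        measure_diff (dy_mono ρ hs A hA n (by omega)) (dy_meas ρ hs A hA n k).nullMeasurableSet
          (measure_ne_top ρ _),
        ih k hkle, ih (k+1) hk2]
      have hfin : (k : ℝ≥0∞) * ρ A / 2 ^ n ≠ ∞ :=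
        (ENNReal.div_lt_top (ENNReal.mul_ne_top (by simp) (measure_ne_top ρ A))
          (by positivity)).ne
      have hd : ((k:ℝ≥0∞) + 1) * ρ A / 2 ^ n - (k:ℝ≥0∞) * ρ A / 2 ^ n = ρ A / 2 ^ n := by
        rw [add_mul, one_mul, ENNReal.add_div, ENNReal.add_sub_cancel_left hfin]
      push_cast
      rw [hd]
      have e1 : (k:ℝ≥0∞) * ρ A / 2 ^ n = 2 * ((k:ℝ≥0∞) * ρ A) / 2 ^ (n+1) := by
        rw [pow_succ, mul_comm ((2:ℝ≥0∞)^n) 2,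
          ENNReal.mul_div_mul_left _ _ (by norm_num) (by norm_num)]
      have e2 : ρ A / 2 ^ n / 2 = ρ A / 2 ^ (n+1) := by
        rw [pow_succ, div_eq_mul_inv, div_eq_mul_inv, div_eq_mul_inv,
          ENNReal.mul_inv (by simp) (by simp), mul_assoc]
      rw [e1, e2, ENNReal.div_add_div_same]
      congr 1
      ring



section CDF

variable {C : Type*} [MeasurableSpace C]
variable (ρ : Measure C) [IsFiniteMeasure ρ] (hs : SierpProp ρ) (Cpart : ℕ → Set C)

/-- weight of part `j` -/
noncomputable def pp (j : ℕ) : ℝ≥0∞ := ρ (Cpart j)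

/-- cumulative weight -/
noncomputable def aa (j : ℕ) : ℝ≥0∞ := ∑ i ∈ Finset.range j, pp ρ Cpart i

/-- per-part dyadic family -/
noncomputable def TT (j n i : ℕ) : Set C := dyadicFam ρ hs (Cpart j) n i

/-- dyadic value -/
noncomputable def dval (j n i : ℕ) : ℝ≥0∞ :=
  aa ρ Cpart j + pp ρ Cpart j * (i : ℝ≥0∞) / 2 ^ n

/-- the cumulative-distribution-like map -/
noncomputable def FF (x : C) : ℝ≥0∞ :=
  ⨅ t : ℕ × ℕ × ℕ,
    if x ∈ TT ρ hs Cpart t.1 t.2.1 t.2.2 then dval ρ Cpart t.1 t.2.1 t.2.2 else 1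

variable (hmeas : ∀ j, MeasurableSet (Cpart j))
  (hdisj : Pairwise (Function.onFun Disjoint Cpart))
  (hcover : (⋃ j, Cpart j) = Set.univ)
  (huniv : ρ Set.univ = 1)

lemma aa_succ (j : ℕ) : aa ρ Cpart (j + 1) = aa ρ Cpart j + pp ρ Cpart j :=
  Finset.sum_range_succ _ j

include hmeas hdisj in
lemma aa_eq (j : ℕ) : aa ρ Cpart j = ρ (⋃ i ∈ Finset.range j, Cpart i) := by
  rw [measure_biUnion_finset ?_ (fun i _ => hmeas i)]
  · rfl
  · intro i _ k _ hik
    exact hdisj hik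

include hmeas hdisj in
lemma aa_le_one : ∀ j, aa ρ Cpart j ≤ ρ Set.univ := by
  intro j
  rw [aa_eq ρ Cpart hmeas hdisj j]
  exact measure_mono (Set.subset_univ _)

lemma aa_mono : Monotone (aa ρ Cpart) := by
  intro i j hij
  exact Finset.sum_le_sum_of_subset (Finset.range_subset_range.mpr hij)

lemma aa_ne_top (j : ℕ) : aa ρ Cpart j ≠ ∞ :=
  (ENNReal.sum_lt_top.mpr fun i _ => measure_lt_top ρ (Cpart i)).ne

include hmeas hdisj hcover in
lemma aa_sup : ⨆ j, aa ρ Cpart j = ρ Set.univ := by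
  have h1 : ∀ j, aa ρ Cpart j = ρ (⋃ i ∈ Finset.range j, Cpart i) :=
    aa_eq ρ Cpart hmeas hdisj
  have h2 : Directed (· ⊆ ·) (fun j => ⋃ i ∈ Finset.range j, Cpart i) := by
    refine Monotone.directed_le ?_
    intro i j hij
    exact Set.biUnion_subset_biUnion_left (Finset.range_subset_range.mpr hij)
  calc ⨆ j, aa ρ Cpart j = ⨆ j, ρ (⋃ i ∈ Finset.range j, Cpart i) := by simp_rw [h1]
    _ = ρ (⋃ j, ⋃ i ∈ Finset.range j, Cpart i) := (Directed.measure_iUnion h2).symm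
    _ = ρ Set.univ := by
        congr 1
        rw [← hcover]
        ext x
        simp only [Set.mem_iUnion, Finset.mem_range]
        constructor
        · rintro ⟨j, i, hij, hx⟩; exact ⟨i, hx⟩
        · rintro ⟨i, hx⟩; exact ⟨i + 1, i, Nat.lt_succ_self i, hx⟩

lemma FF_le {x : C} {j n i : ℕ} (hx : x ∈ TT ρ hs Cpart j n i) :
    FF ρ hs Cpart x ≤ dval ρ Cpart j n i := by
  have := iInf_le (fun t : ℕ × ℕ × ℕ =>
    if x ∈ TT ρ hs Cpart t.1 t.2.1 t.2.2 then dval ρ Cpart t.1 t.2.1 t.2.2 else 1) (j, n, i)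
  rwa [if_pos hx] at this

lemma TT_zero_one (j : ℕ) : TT ρ hs Cpart j 0 1 = Cpart j := by
  simp [TT, dyadicFam]

lemma dval_zero_one (j : ℕ) : dval ρ Cpart j 0 1 = aa ρ Cpart j + pp ρ Cpart j := by
  simp [dval]

lemma dval_mono (j n : ℕ) {i i' : ℕ} (h : i ≤ i') :
    dval ρ Cpart j n i ≤ dval ρ Cpart j n i' := by
  unfold dval
  gcongr


lemma FF_meas (hmeas : ∀ j, MeasurableSet (Cpart j)) : Measurable (FF ρ hs Cpart) := by
  refine Measurable.iInf fun t => ?_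
  refine Measurable.ite ?_ measurable_const measurable_const
  exact dy_meas ρ hs (Cpart t.1) (hmeas t.1) t.2.1 t.2.2

include hmeas hdisj in
lemma FF_lt_iff {x : C} {j : ℕ} (hx : x ∈ Cpart j) {t : ℝ≥0∞} (ht : t ≤ 1) :
    FF ρ hs Cpart x < t ↔
      ∃ n i, x ∈ TT ρ hs Cpart j n i ∧ dval ρ Cpart j n i < t := by
  constructor
  · intro h
    obtain ⟨⟨j', n, i⟩, hlt⟩ := iInf_lt_iff.mp h
    by_cases hmem : x ∈ TT ρ hs Cpart j' n i
    · rw [if_pos hmem] at hlt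
      have hj : j' = j := by
        by_contra hne
        have hxj' : x ∈ Cpart j' := dy_subset ρ hs (Cpart j') (hmeas j') n i hmem
        exact (hdisj hne).le_bot ⟨hxj', hx⟩
      subst hj
      exact ⟨n, i, hmem, hlt⟩
    · rw [if_neg hmem] at hlt
      exact absurd (hlt.trans_le ht) (lt_irrefl _)
  · rintro ⟨n, i, hmem, hlt⟩
    exact lt_of_le_of_lt (FF_le ρ hs Cpart hmem) hlt

include hmeas hdisj in
lemma FF_le_one (x : C) (hcover : (⋃ j, Cpart j) = Set.univ)
    (huniv : ρ Set.univ = 1) : FF ρ hs Cpart x ≤ 1 := by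
  have : x ∈ ⋃ j, Cpart j := hcover ▸ Set.mem_univ x
  obtain ⟨j, hj⟩ := Set.mem_iUnion.mp this
  have h1 : FF ρ hs Cpart x ≤ dval ρ Cpart j 0 1 :=
    FF_le ρ hs Cpart (by rwa [TT_zero_one])
  rw [dval_zero_one, ← aa_succ] at h1
  exact h1.trans ((aa_le_one ρ Cpart hmeas hdisj (j+1)).trans huniv.le)

end CDF



section CDF2

variable {C : Type*} [MeasurableSpace C]
variable (ρ : Measure C) [IsFiniteMeasure ρ] (hs : SierpProp ρ) (Cpart : ℕ → Set C)
variable (hmeas : ∀ j, MeasurableSet (Cpart j))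
  (hdisj : Pairwise (Function.onFun Disjoint Cpart))

lemma dval_scale (j n m i : ℕ) :
    dval ρ Cpart j (n + m) (i * 2 ^ m) = dval ρ Cpart j n i := by
  unfold dval
  congr 1
  have h1 : ((i * 2 ^ m : ℕ) : ℝ≥0∞) = (i : ℝ≥0∞) * 2 ^ m := by push_cast; ring
  rw [h1, pow_add, ← mul_assoc, ENNReal.mul_div_mul_right _ _ (by positivity) (by simp)]

include hmeas in
lemma TT_measure (j : ℕ) {n i : ℕ} (h : i ≤ 2 ^ n) :
    ρ (TT ρ hs Cpart j n i) = (i : ℝ≥0∞) * pp ρ Cpart j / 2 ^ n :=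
  dy_measure ρ hs (Cpart j) (hmeas j) n i h

include hmeas hdisj in
lemma Ldist (j : ℕ) {t : ℝ≥0∞} (ht : t ≤ 1) :
    ρ (Cpart j ∩ {x | FF ρ hs Cpart x < t}) =
      min (pp ρ Cpart j) (t - aa ρ Cpart j) := by
  classical
  set Q := {q : ℕ × ℕ // q.2 ≤ 2 ^ q.1 ∧ dval ρ Cpart j q.1 q.2 < t} with hQ
  set u : Q → Set C := fun q => TT ρ hs Cpart j q.1.1 q.1.2 with hu
  have hu_sub : ∀ q : Q, u q ⊆ Cpart j ∩ {x | FF ρ hs Cpart x < t} := by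
    rintro ⟨⟨n, i⟩, hi, hv⟩ x hx
    exact ⟨dy_subset ρ hs (Cpart j) (hmeas j) n i hx,
      lt_of_le_of_lt (FF_le ρ hs Cpart hx) hv⟩
  have hL : Cpart j ∩ {x | FF ρ hs Cpart x < t} = ⋃ q : Q, u q := by
    refine Set.Subset.antisymm ?_ (Set.iUnion_subset hu_sub)
    rintro x ⟨hxj, hxF⟩
    obtain ⟨n, i, hmem, hlt⟩ := (FF_lt_iff ρ hs Cpart hmeas hdisj hxj ht).mp hxF
    have hvmin : dval ρ Cpart j n (min i (2 ^ n)) < t :=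
      lt_of_le_of_lt (dval_mono ρ Cpart j n (min_le_left _ _)) hlt
    refine Set.mem_iUnion.mpr ⟨⟨(n, min i (2 ^ n)), ⟨min_le_right _ _, hvmin⟩⟩, ?_⟩
    by_cases hile : i ≤ 2 ^ n
    · simpa only [hu, min_eq_left hile] using hmem
    · push_neg at hile
      have : TT ρ hs Cpart j n (2 ^ n) = Cpart j :=
        dy_top ρ hs (Cpart j) (hmeas j) n _ le_rfl
      simpa only [hu, min_eq_right hile.le, this] using hxj
  have hdir : Directed (· ⊆ ·) u := by
    rintro ⟨⟨n, i⟩, hi, hv⟩ ⟨⟨n', i'⟩, hi', hv'⟩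
    have hb1 : i * 2 ^ n' ≤ 2 ^ (n + n') := by
      rw [pow_add]; exact Nat.mul_le_mul_right _ hi
    have hb2 : i' * 2 ^ n ≤ 2 ^ (n + n') := by
      rw [add_comm, pow_add]; exact Nat.mul_le_mul_right _ hi'
    have hv1 : dval ρ Cpart j (n + n') (i * 2 ^ n') < t := by
      rwa [dval_scale]
    have hv2 : dval ρ Cpart j (n + n') (i' * 2 ^ n) < t := by
      rw [add_comm]; rwa [dval_scale]
    have hvmax : dval ρ Cpart j (n + n') (max (i * 2 ^ n') (i' * 2 ^ n)) < t := by
      rcases max_choice (i * 2 ^ n') (i' * 2 ^ n) with h | h <;> rw [h]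
      exacts [hv1, hv2]
    refine ⟨⟨(n + n', max (i * 2 ^ n') (i' * 2 ^ n)),
      ⟨max_le hb1 hb2, hvmax⟩⟩, ?_, ?_⟩
    · show TT ρ hs Cpart j n i ⊆ TT ρ hs Cpart j (n + n') _
      have h1 : TT ρ hs Cpart j (n + n') (i * 2 ^ n') = TT ρ hs Cpart j n i :=
        dy_consist ρ hs (Cpart j) (hmeas j) n i n'
      rw [← h1]
      exact dy_mono ρ hs (Cpart j) (hmeas j) _ (le_max_left _ _)
    · intro x hx
      have h1 : TT ρ hs Cpart j (n' + n) (i' * 2 ^ n) = TT ρ hs Cpart j n' i' :=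
        dy_consist ρ hs (Cpart j) (hmeas j) n' i' n
      have hx1 : x ∈ TT ρ hs Cpart j (n + n') (i' * 2 ^ n) := by
        rw [add_comm n n', h1]; exact hx
      exact dy_mono ρ hs (Cpart j) (hmeas j) _ (le_max_right _ _) hx1
  rw [hL, Directed.measure_iUnion hdir]
  refine le_antisymm ?_ ?_
  · refine le_min ?_ ?_
    · refine iSup_le ?_
      rintro ⟨⟨n, i⟩, hi, hv⟩
      exact measure_mono (dy_subset ρ hs (Cpart j) (hmeas j) n i)
    · refine iSup_le ?_
      rintro ⟨⟨n, i⟩, hi, hv⟩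
      have h1 : ρ (u ⟨(n, i), hi, hv⟩) = (i : ℝ≥0∞) * pp ρ Cpart j / 2 ^ n :=
        TT_measure ρ hs Cpart hmeas j hi
      rw [h1]
      have hv' : aa ρ Cpart j + pp ρ Cpart j * (i : ℝ≥0∞) / 2 ^ n ≤ t := hv.le
      refine ENNReal.le_sub_of_add_le_left (aa_ne_top ρ Cpart j) ?_
      calc aa ρ Cpart j + (i : ℝ≥0∞) * pp ρ Cpart j / 2 ^ n
          = aa ρ Cpart j + pp ρ Cpart j * (i : ℝ≥0∞) / 2 ^ n := by ring
        _ ≤ t := hv'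
  · by_cases hp0 : pp ρ Cpart j = 0
    · exact (min_le_left _ _).trans (by rw [hp0]; exact zero_le)
    by_cases hta : t ≤ aa ρ Cpart j
    · exact (min_le_right _ _).trans (by rw [tsub_eq_zero_of_le hta]; exact zero_le)
    push_neg at hta
    have htne : t ≠ ∞ := (lt_of_le_of_lt ht ENNReal.one_lt_top).ne
    have hppne : pp ρ Cpart j ≠ ∞ := measure_ne_top ρ _
    have haane : aa ρ Cpart j ≠ ∞ := aa_ne_top ρ Cpart j
    set π := (pp ρ Cpart j).toReal with hπ
    set α := (aa ρ Cpart j).toReal with hα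
    set τ := t.toReal with hτ
    have hπpos : 0 < π := ENNReal.toReal_pos hp0 hppne
    have hαnn : 0 ≤ α := ENNReal.toReal_nonneg
    have hατ : α < τ := (ENNReal.toReal_lt_toReal haane htne).mpr hta
    set β := min π (τ - α) with hβ
    have hβpos : 0 < β := lt_min hπpos (by linarith)
    have hβπ : β ≤ π := min_le_left _ _
    set dstar := β / π with hds
    have hd0 : 0 < dstar := div_pos hβpos hπpos
    have hd1 : dstar ≤ 1 := (div_le_one hπpos).mpr hβπ
    -- identify min with ofReal β
    have htsub : t - aa ρ Cpart j = ENNReal.ofReal (τ - α) := by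
      rw [ENNReal.ofReal_sub _ hαnn, ENNReal.ofReal_toReal htne, ENNReal.ofReal_toReal haane]
    have hmineq : min (pp ρ Cpart j) (t - aa ρ Cpart j) = ENNReal.ofReal β := by
      rw [htsub, ← ENNReal.ofReal_toReal hppne, ← hπ, hβ]
      rcases le_total π (τ - α) with h | h
      · rw [min_eq_left h, min_eq_left (ENNReal.ofReal_le_ofReal h)]
      · rw [min_eq_right h, min_eq_right (ENNReal.ofReal_le_ofReal h)]
    rw [hmineq]
    refine ENNReal.le_of_forall_pos_le_add ?_
    intro ε hε hfin
    have hεR : (0:ℝ) < (ε : ℝ) := by exact_mod_cast hε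
    obtain ⟨n, hn⟩ : ∃ n : ℕ, π / (ε : ℝ) < 2 ^ n := pow_unbounded_of_one_lt _ one_lt_two
    have h2npos : (0:ℝ) < 2 ^ n := by positivity
    have hπ2n : π / 2 ^ n < (ε : ℝ) := by
      rw [div_lt_iff₀ h2npos]
      rw [div_lt_iff₀ hεR] at hn
      calc π < 2 ^ n * (ε:ℝ) := hn
        _ = (ε:ℝ) * 2 ^ n := by ring
    set i : ℕ := ⌈(2 ^ n : ℝ) * dstar⌉₊ - 1 with hi
    have hceilpos : 1 ≤ ⌈(2 ^ n : ℝ) * dstar⌉₊ := by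
      rw [Nat.one_le_ceil_iff]
      positivity
    have hicast : (i : ℝ) = (⌈(2 ^ n : ℝ) * dstar⌉₊ : ℝ) - 1 := by
      rw [hi, Nat.cast_sub hceilpos, Nat.cast_one]
    have hi_lt : (i : ℝ) < 2 ^ n * dstar := by
      rw [hicast]
      have := Nat.ceil_lt_add_one (by positivity : (0:ℝ) ≤ (2 ^ n : ℝ) * dstar)
      linarith
    have hi_ge : 2 ^ n * dstar ≤ (i : ℝ) + 1 := by
      rw [hicast]
      have := Nat.le_ceil ((2 ^ n : ℝ) * dstar)
      linarith
    have hile : i ≤ 2 ^ n := by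
      have h1 : (i : ℝ) < (2:ℝ) ^ n := lt_of_lt_of_le hi_lt (by nlinarith)
      have h2 : ((2:ℝ) ^ n) = ((2 ^ n : ℕ) : ℝ) := by push_cast; ring
      rw [h2] at h1
      exact_mod_cast h1.le
    -- dval < t
    have hval_of : pp ρ Cpart j * (i : ℝ≥0∞) / 2 ^ n = ENNReal.ofReal (π * i / 2 ^ n) := by
      rw [← ENNReal.ofReal_toReal hppne, ← hπ]
      have hcasti : ((i : ℕ) : ℝ≥0∞) = ENNReal.ofReal (i : ℝ) :=
        (ENNReal.ofReal_natCast i).symm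
      have hcast2 : ((2 : ℝ≥0∞) ^ n) = ENNReal.ofReal ((2:ℝ) ^ n) := by
        rw [ENNReal.ofReal_pow (by norm_num : (0:ℝ) ≤ 2), ENNReal.ofReal_ofNat]
      rw [hcasti, hcast2, ← ENNReal.ofReal_mul (by positivity),
        ← ENNReal.ofReal_div_of_pos h2npos]
    have hdval_of : dval ρ Cpart j n i = ENNReal.ofReal (α + π * i / 2 ^ n) := by
      unfold dval
      rw [hval_of, ← ENNReal.ofReal_toReal haane, ← hα,
        ← ENNReal.ofReal_add hαnn (by positivity)]
    have hreal_lt : α + π * i / 2 ^ n < τ := by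
      have h1 : (i : ℝ) / 2 ^ n < dstar := (div_lt_iff₀ h2npos).mpr (by linarith)
      have h2 : π * ((i:ℝ) / 2 ^ n) < π * dstar := by
        exact mul_lt_mul_of_pos_left h1 hπpos
      have h3 : π * dstar = β := by
        rw [hds, mul_div_cancel₀ _ hπpos.ne']
      have h4 : β ≤ τ - α := min_le_right _ _
      have h5 : π * i / 2 ^ n = π * ((i:ℝ) / 2 ^ n) := by ring
      linarith [h5 ▸ h2]
    have hval_lt : dval ρ Cpart j n i < t := by
      rw [hdval_of, ← ENNReal.ofReal_toReal htne, ← hτ]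
      exact (ENNReal.ofReal_lt_ofReal_iff (by linarith)).mpr hreal_lt
    set q0 : Q := ⟨(n, i), hile, hval_lt⟩ with hq0
    have hmeasq0 : ρ (u q0) = ENNReal.ofReal ((i:ℝ) * π / 2 ^ n) := by
      have h1 : ρ (u q0) = (i : ℝ≥0∞) * pp ρ Cpart j / 2 ^ n :=
        TT_measure ρ hs Cpart hmeas j hile
      rw [h1, mul_comm, hval_of]
      congr 1
      ring
    have hβle : β ≤ (i:ℝ) * π / 2 ^ n + ε := by
      have h1 : dstar - 1 / 2 ^ n ≤ (i : ℝ) / 2 ^ n := by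
        have h1a : dstar ≤ ((i:ℝ) + 1) / 2 ^ n := by
          rw [le_div_iff₀ h2npos]; linarith
        rw [add_div] at h1a
        linarith
      have h2 : π * (dstar - 1 / 2 ^ n) ≤ π * ((i:ℝ) / 2 ^ n) :=
        mul_le_mul_of_nonneg_left h1 hπpos.le
      have h3 : π * dstar = β := by rw [hds, mul_div_cancel₀ _ hπpos.ne']
      have h4 : π * (1 / 2 ^ n) < ε := by
        rw [mul_one_div]; exact hπ2n
      have h5 : π * ((i:ℝ) / 2 ^ n) = (i:ℝ) * π / 2 ^ n := by ring
      have h6 : π * (dstar - 1 / 2 ^ n) = π * dstar - π * (1 / 2 ^ n) := by ring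
      linarith
    calc ENNReal.ofReal β ≤ ENNReal.ofReal ((i:ℝ) * π / 2 ^ n + ε) :=
          ENNReal.ofReal_le_ofReal hβle
      _ = ENNReal.ofReal ((i:ℝ) * π / 2 ^ n) + ENNReal.ofReal (ε:ℝ) :=
          ENNReal.ofReal_add (by positivity) hε.le
      _ = ρ (u q0) + ε := by rw [hmeasq0, ENNReal.ofReal_coe_nnreal]
      _ ≤ (⨆ q : Q, ρ (u q)) + ε := add_le_add_left (le_iSup (fun q : Q => ρ (u q)) q0) _

end CDF2



section Cells

variable {C : Type*} [MeasurableSpace C]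
variable (ρ : Measure C) [IsFiniteMeasure ρ] (hs : SierpProp ρ) (Cpart : ℕ → Set C)
variable (hmeas : ∀ j, MeasurableSet (Cpart j))
  (hdisj : Pairwise (Function.onFun Disjoint Cpart))
  (hcover : (⋃ j, Cpart j) = Set.univ)
  (huniv : ρ Set.univ = 1)

lemma tele (j : ℕ) (t : ℝ≥0∞) :
    min (pp ρ Cpart j) (t - aa ρ Cpart j) =
      min (aa ρ Cpart (j + 1)) t - min (aa ρ Cpart j) t := by
  rcases le_total t (aa ρ Cpart j) with h1 | h1
  · rw [tsub_eq_zero_of_le h1, min_eq_right zero_le,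
      min_eq_right (h1.trans (aa_mono ρ Cpart (Nat.le_succ j))), min_eq_right h1, tsub_self]
  · rcases le_total t (aa ρ Cpart (j + 1)) with h2 | h2
    · rw [min_eq_right h2, min_eq_left h1]
      rw [min_eq_right]
      refine tsub_le_iff_left.mpr ?_
      rw [← aa_succ]
      exact h2
    · rw [min_eq_left h2, min_eq_left (h1.trans ?h1b)]
      case h1b => exact le_rfl
      rw [min_eq_left]
      · rw [aa_succ, ENNReal.add_sub_cancel_left (aa_ne_top ρ Cpart j)]
      · refine ENNReal.le_sub_of_add_le_left (aa_ne_top ρ Cpart j) ?_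
        rw [← aa_succ]
        exact h2

lemma partial_tele (t : ℝ≥0∞) : ∀ N,
    (∑ j ∈ Finset.range N, (min (aa ρ Cpart (j + 1)) t - min (aa ρ Cpart j) t)) =
      min (aa ρ Cpart N) t := by
  intro N
  induction N with
  | zero => simp [aa]
  | succ N ih =>
    rw [Finset.sum_range_succ, ih, add_comm,
      tsub_add_cancel_of_le (min_le_min (aa_mono ρ Cpart (Nat.le_succ N)) le_rfl)]

include hmeas hdisj hcover huniv in
lemma Fdist {t : ℝ≥0∞} (ht : t ≤ 1) : ρ {x | FF ρ hs Cpart x < t} = t := by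
  have hFm : MeasurableSet {x | FF ρ hs Cpart x < t} :=
    measurableSet_lt (FF_meas ρ hs Cpart hmeas) measurable_const
  have hdecomp : {x | FF ρ hs Cpart x < t} =
      ⋃ j, (Cpart j ∩ {x | FF ρ hs Cpart x < t}) := by
    rw [← Set.iUnion_inter, hcover, Set.univ_inter]
  have hd2 : Pairwise (Function.onFun Disjoint
      fun j => Cpart j ∩ {x | FF ρ hs Cpart x < t}) := fun i j hij =>
    (hdisj hij).mono Set.inter_subset_left Set.inter_subset_left
  rw [hdecomp, measure_iUnion hd2 (fun j => (hmeas j).inter hFm)]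
  calc (∑' j, ρ (Cpart j ∩ {x | FF ρ hs Cpart x < t}))
      = ∑' j, (min (aa ρ Cpart (j + 1)) t - min (aa ρ Cpart j) t) := by
        congr 1
        ext j
        rw [Ldist ρ hs Cpart hmeas hdisj j ht, tele]
    _ = ⨆ N, ∑ j ∈ Finset.range N,
          (min (aa ρ Cpart (j + 1)) t - min (aa ρ Cpart j) t) :=
        ENNReal.tsum_eq_iSup_nat
    _ = ⨆ N, min (aa ρ Cpart N) t := by
        congr 1
        ext N
        exact partial_tele ρ Cpart t N
    _ = t := by
        refine le_antisymm (iSup_le fun N => min_le_right _ _) ?_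
        have h1 : (⨆ N, min (aa ρ Cpart N) t) = (⨆ N, aa ρ Cpart N) ⊓ t := by
          rw [iSup_inf_eq]
        rw [h1, aa_sup ρ Cpart hmeas hdisj hcover, huniv]
        simp [ht]

/-- the equal-weight cells -/
noncomputable def DD (n k : ℕ) : Set C :=
  if k = 2 ^ n then FF ρ hs Cpart ⁻¹' Set.Ici (((2 ^ n - 1 : ℕ) : ℝ≥0∞) / 2 ^ n)
  else FF ρ hs Cpart ⁻¹' Set.Ico (((k - 1 : ℕ) : ℝ≥0∞) / 2 ^ n) (((k : ℕ) : ℝ≥0∞) / 2 ^ n)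

include hmeas in
lemma DD_meas (n k : ℕ) : MeasurableSet (DD ρ hs Cpart n k) := by
  unfold DD
  split
  · exact (FF_meas ρ hs Cpart hmeas) measurableSet_Ici
  · exact (FF_meas ρ hs Cpart hmeas) measurableSet_Ico

lemma Ico_pre (a b : ℝ≥0∞) :
    FF ρ hs Cpart ⁻¹' Set.Ico a b =
      {x | FF ρ hs Cpart x < b} \ {x | FF ρ hs Cpart x < a} := by
  ext x
  simp only [Set.mem_preimage, Set.mem_Ico, Set.mem_diff, Set.mem_setOf_eq, not_lt]
  tauto

lemma Ici_pre (a : ℝ≥0∞) :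
    FF ρ hs Cpart ⁻¹' Set.Ici a = Set.univ \ {x | FF ρ hs Cpart x < a} := by
  ext x
  simp only [Set.mem_preimage, Set.mem_Ici, Set.mem_diff, Set.mem_setOf_eq, not_lt,
    Set.mem_univ, true_and]

include hmeas hdisj hcover huniv in
lemma measure_Ico_pre {a b : ℝ≥0∞} (hab : a ≤ b) (hb : b ≤ 1) :
    ρ (FF ρ hs Cpart ⁻¹' Set.Ico a b) = b - a := by
  rw [Ico_pre, measure_diff ?hsub ?hm (by finiteness),
    Fdist ρ hs Cpart hmeas hdisj hcover huniv hb,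
    Fdist ρ hs Cpart hmeas hdisj hcover huniv (hab.trans hb)]
  case hsub => exact fun x hx => lt_of_lt_of_le hx hab
  case hm =>
    exact (measurableSet_lt (FF_meas ρ hs Cpart hmeas) measurable_const).nullMeasurableSet

include hmeas hdisj hcover huniv in
lemma measure_Ici_pre {a : ℝ≥0∞} (ha : a ≤ 1) :
    ρ (FF ρ hs Cpart ⁻¹' Set.Ici a) = 1 - a := by
  rw [Ici_pre, measure_diff (Set.subset_univ _) ?hm (by finiteness),
    Fdist ρ hs Cpart hmeas hdisj hcover huniv ha, huniv]
  case hm =>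
    exact (measurableSet_lt (FF_meas ρ hs Cpart hmeas) measurable_const).nullMeasurableSet

lemma cast_div_le {m m' n : ℕ} (h : m ≤ m') :
    ((m : ℝ≥0∞)) / 2 ^ n ≤ ((m' : ℝ≥0∞)) / 2 ^ n := by
  gcongr


lemma cast_div_le_one {m n : ℕ} (h : m ≤ 2 ^ n) : ((m : ℝ≥0∞)) / 2 ^ n ≤ 1 := by
  rw [ENNReal.div_le_iff (by positivity) (by simp), one_mul]
  exact_mod_cast h

lemma succ_div_sub {k n : ℕ} (hk : 1 ≤ k) :
    ((k : ℝ≥0∞)) / 2 ^ n - ((k - 1 : ℕ) : ℝ≥0∞) / 2 ^ n = (2 ^ n : ℝ≥0∞)⁻¹ := by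
  have h1 : ((k : ℝ≥0∞)) / 2 ^ n = ((k - 1 : ℕ) : ℝ≥0∞) / 2 ^ n + 1 / 2 ^ n := by
    rw [ENNReal.div_add_div_same]
    congr 1
    have : ((k - 1 : ℕ) : ℝ≥0∞) + 1 = ((k - 1 + 1 : ℕ) : ℝ≥0∞) := by push_cast; ring
    rw [this]
    congr 1
    omega
  rw [h1, ENNReal.add_sub_cancel_left ?fin, one_div]
  case fin =>
    exact (ENNReal.div_lt_top (by simp) (pow_ne_zero n (by norm_num))).ne

include hmeas hdisj hcover huniv in
lemma DD_measure (n k : ℕ) (hk : k ∈ Finset.Icc 1 (2 ^ n)) :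
    ρ (DD ρ hs Cpart n k) = (2 ^ n : ℝ≥0∞)⁻¹ := by
  rw [Finset.mem_Icc] at hk
  unfold DD
  split
  · rw [measure_Ici_pre ρ hs Cpart hmeas hdisj hcover huniv
      (cast_div_le_one (Nat.sub_le _ _))]
    have h1 : ((2 ^ n : ℕ) : ℝ≥0∞) / 2 ^ n = 1 := by
      rw [show ((2 ^ n : ℕ) : ℝ≥0∞) = (2:ℝ≥0∞) ^ n by push_cast; ring]
      exact ENNReal.div_self (pow_ne_zero n (by norm_num)) (ENNReal.pow_ne_top (by norm_num))
    calc (1 : ℝ≥0∞) - ((2 ^ n - 1 : ℕ) : ℝ≥0∞) / 2 ^ n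
        = ((2 ^ n : ℕ) : ℝ≥0∞) / 2 ^ n - ((2 ^ n - 1 : ℕ) : ℝ≥0∞) / 2 ^ n := by rw [h1]
      _ = (2 ^ n : ℝ≥0∞)⁻¹ := succ_div_sub Nat.one_le_two_pow
  · rw [measure_Ico_pre ρ hs Cpart hmeas hdisj hcover huniv
      (cast_div_le (Nat.sub_le _ _)) (cast_div_le_one hk.2)]
    exact succ_div_sub hk.1

end Cells



section Cells2

variable {C : Type*} [MeasurableSpace C]
variable (ρ : Measure C) [IsFiniteMeasure ρ] (hs : SierpProp ρ) (Cpart : ℕ → Set C)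
variable (hmeas : ∀ j, MeasurableSet (Cpart j))
  (hdisj : Pairwise (Function.onFun Disjoint Cpart))
  (hcover : (⋃ j, Cpart j) = Set.univ)
  (huniv : ρ Set.univ = 1)

lemma DD_subset_Ici (n k : ℕ) (hk : k ≤ 2 ^ n) :
    DD ρ hs Cpart n k ⊆ FF ρ hs Cpart ⁻¹' Set.Ici (((k - 1 : ℕ) : ℝ≥0∞) / 2 ^ n) := by
  unfold DD
  split
  · next h => subst h; exact subset_rfl
  · exact Set.preimage_mono Set.Ico_subset_Ici_self

lemma DD_subset_Iio (n k : ℕ) (hk : k < 2 ^ n) :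
    DD ρ hs Cpart n k ⊆ FF ρ hs Cpart ⁻¹' Set.Iio (((k : ℕ) : ℝ≥0∞) / 2 ^ n) := by
  unfold DD
  rw [if_neg hk.ne]
  exact Set.preimage_mono Set.Ico_subset_Iio_self

lemma DD_disj (n : ℕ) (k : ℕ) (hk : k ∈ Finset.Icc 1 (2 ^ n))
    (l : ℕ) (hl : l ∈ Finset.Icc 1 (2 ^ n)) (hne : k ≠ l) :
    Disjoint (DD ρ hs Cpart n k) (DD ρ hs Cpart n l) := by
  rw [Finset.mem_Icc] at hk hl
  have aux : ∀ k l, 1 ≤ k → l ≤ 2 ^ n → k < l →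
      Disjoint (DD ρ hs Cpart n k) (DD ρ hs Cpart n l) := by
    intro k l hk1 hl2 hkl
    have hk2 : k < 2 ^ n := lt_of_lt_of_le hkl hl2
    refine Disjoint.mono (DD_subset_Iio ρ hs Cpart n k hk2)
      (DD_subset_Ici ρ hs Cpart n l hl2) ?_
    exact Disjoint.preimage _ (Set.Iio_disjoint_Ici (cast_div_le (by omega)))
  rcases hne.lt_or_gt with h | h
  · exact aux k l hk.1 hl.2 h
  · exact (aux l k hl.1 hk.2 h).symm

lemma DD_cover (n : ℕ) : (⋃ k ∈ Finset.Icc 1 (2 ^ n), DD ρ hs Cpart n k) = Set.univ := by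
  refine Set.eq_univ_of_forall fun x => ?_
  simp only [Set.mem_iUnion, Finset.mem_Icc]
  rcases le_or_gt (((2 ^ n - 1 : ℕ) : ℝ≥0∞) / 2 ^ n) (FF ρ hs Cpart x) with h | h
  · exact ⟨2 ^ n, ⟨Nat.one_le_two_pow, le_rfl⟩, by rw [DD, if_pos rfl]; exact h⟩
  · have hex : ∃ k : ℕ, FF ρ hs Cpart x < ((k : ℕ) : ℝ≥0∞) / 2 ^ n := ⟨2 ^ n - 1, h⟩
    classical
    set k0 := Nat.find hex with hk0
    have hspec : FF ρ hs Cpart x < ((k0 : ℕ) : ℝ≥0∞) / 2 ^ n := Nat.find_spec hex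
    have hk0le : k0 ≤ 2 ^ n - 1 := Nat.find_min' hex h
    have hk0pos : 1 ≤ k0 := by
      by_contra hc
      push_neg at hc
      interval_cases k0
      · simp only [Nat.cast_zero, ENNReal.zero_div] at hspec
        exact absurd hspec (by simp)
    have hlow : ¬ FF ρ hs Cpart x < ((k0 - 1 : ℕ) : ℝ≥0∞) / 2 ^ n :=
      Nat.find_min hex (by omega)
    refine ⟨k0, ⟨hk0pos, by omega⟩, ?_⟩
    rw [DD, if_neg (by omega)]
    exact ⟨not_lt.mp hlow, hspec⟩

lemma cast_twoscale (n m : ℕ) :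
    ((2 * m : ℕ) : ℝ≥0∞) / 2 ^ (n + 1) = ((m : ℕ) : ℝ≥0∞) / 2 ^ n := by
  have h1 : ((2 * m : ℕ) : ℝ≥0∞) = 2 * (m : ℝ≥0∞) := by push_cast; ring
  rw [h1, pow_succ, mul_comm ((2:ℝ≥0∞) ^ n) 2,
    ENNReal.mul_div_mul_left _ _ (by norm_num) (by norm_num)]

lemma DD_refine (n k : ℕ) (hk : k ∈ Finset.Icc 1 (2 ^ n)) :
    DD ρ hs Cpart n k =
      DD ρ hs Cpart (n + 1) (2 * k - 1) ∪ DD ρ hs Cpart (n + 1) (2 * k) := by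
  rw [Finset.mem_Icc] at hk
  obtain ⟨hk1, hk2⟩ := hk
  have hp : (2:ℕ) ^ (n + 1) = 2 * 2 ^ n := by ring
  have hodd : 2 * k - 1 ≠ 2 ^ (n + 1) := by omega
  have e1 : ((2 * k - 1 - 1 : ℕ) : ℝ≥0∞) / 2 ^ (n + 1) = ((k - 1 : ℕ) : ℝ≥0∞) / 2 ^ n := by
    rw [show 2 * k - 1 - 1 = 2 * (k - 1) by omega]
    exact cast_twoscale n (k - 1)
  have e2 : ((2 * k : ℕ) : ℝ≥0∞) / 2 ^ (n + 1) = ((k : ℕ) : ℝ≥0∞) / 2 ^ n :=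
    cast_twoscale n k
  have hle1 : ((2 * k - 1 - 1 : ℕ) : ℝ≥0∞) / 2 ^ (n + 1) ≤
      ((2 * k - 1 : ℕ) : ℝ≥0∞) / 2 ^ (n + 1) := cast_div_le (by omega)
  rcases eq_or_lt_of_le hk2 with heq | hlt
  · -- k = 2^n : parent is the Ici cell
    subst heq
    have h2k : 2 * 2 ^ n = 2 ^ (n + 1) := by omega
    have e3 : (2 * 2 ^ n - 1 : ℕ) = 2 ^ (n + 1) - 1 := by omega
    rw [DD, if_pos rfl, DD, if_neg hodd, DD, if_pos h2k]
    rw [← Set.preimage_union]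
    congr 1
    rw [e3] at hle1 ⊢
    rw [Set.Ico_union_Ici_eq_Ici hle1]
    congr 1
    rw [show (2:ℕ) ^ (n + 1) - 1 - 1 = 2 * (2 ^ n - 1) by omega,
      cast_twoscale n (2 ^ n - 1)]
  · -- k < 2^n : all Ico cells
    have hlt2 : 2 * k < 2 ^ (n + 1) := by omega
    have hmid : ((2 * k - 1 : ℕ) : ℝ≥0∞) / 2 ^ (n + 1) ≤
        ((2 * k : ℕ) : ℝ≥0∞) / 2 ^ (n + 1) := cast_div_le (by omega)
    rw [DD, if_neg hlt.ne, DD, if_neg hodd, DD, if_neg hlt2.ne]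
    rw [← Set.preimage_union, Set.Ico_union_Ico_eq_Ico hle1 hmid, e1, e2]

include hmeas hdisj hcover huniv in
lemma DD_pure (j n k : ℕ) (hk1 : 1 ≤ k) (hk2 : k < 2 ^ n)
    (h1 : aa ρ Cpart j ≤ ((k - 1 : ℕ) : ℝ≥0∞) / 2 ^ n)
    (h2 : ((k : ℕ) : ℝ≥0∞) / 2 ^ n ≤ aa ρ Cpart j + pp ρ Cpart j) :
    ρ (DD ρ hs Cpart n k \ Cpart j) = 0 := by
  set a := ((k - 1 : ℕ) : ℝ≥0∞) / 2 ^ n with ha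
  set b := ((k : ℕ) : ℝ≥0∞) / 2 ^ n with hb
  have hab : a ≤ b := cast_div_le (by omega)
  have hb1 : b ≤ 1 := cast_div_le_one hk2.le
  have hDD : DD ρ hs Cpart n k =
      {x | FF ρ hs Cpart x < b} \ {x | FF ρ hs Cpart x < a} := by
    rw [DD, if_neg hk2.ne, Ico_pre]
  -- measure of the intersection with Cpart j
  have hintermeas : ρ (DD ρ hs Cpart n k ∩ Cpart j) = (2 ^ n : ℝ≥0∞)⁻¹ := by
    have hset : DD ρ hs Cpart n k ∩ Cpart j =
        (Cpart j ∩ {x | FF ρ hs Cpart x < b}) \ (Cpart j ∩ {x | FF ρ hs Cpart x < a}) := by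
      rw [hDD]
      ext x
      simp only [Set.mem_inter_iff, Set.mem_diff, Set.mem_setOf_eq]
      tauto
    have hsub : (Cpart j ∩ {x | FF ρ hs Cpart x < a}) ⊆
        (Cpart j ∩ {x | FF ρ hs Cpart x < b}) :=
      Set.inter_subset_inter_right _ fun x hx => lt_of_lt_of_le hx hab
    have hmsub : MeasurableSet (Cpart j ∩ {x | FF ρ hs Cpart x < a}) :=
      (hmeas j).inter (measurableSet_lt (FF_meas ρ hs Cpart hmeas) measurable_const)
    rw [hset, measure_diff hsub hmsub.nullMeasurableSet (by finiteness),
      Ldist ρ hs Cpart hmeas hdisj j hb1,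
      Ldist ρ hs Cpart hmeas hdisj j (hab.trans hb1)]
    have hble : b - aa ρ Cpart j ≤ pp ρ Cpart j :=
      tsub_le_iff_left.mpr h2
    have hale : a - aa ρ Cpart j ≤ pp ρ Cpart j :=
      le_trans (tsub_le_tsub_right hab _) hble
    rw [min_eq_right hble, min_eq_right hale,
      tsub_tsub_tsub_cancel_right h1]
    exact succ_div_sub hk1
  have htotal := measure_inter_add_diff (μ := ρ) (DD ρ hs Cpart n k) (hmeas j)
  rw [hintermeas, DD_measure ρ hs Cpart hmeas hdisj hcover huniv n k
    (Finset.mem_Icc.mpr ⟨hk1, hk2.le⟩)] at htotal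
  have hfin : (2 ^ n : ℝ≥0∞)⁻¹ ≠ ∞ := by
    simp [ENNReal.inv_ne_top]
  calc ρ (DD ρ hs Cpart n k \ Cpart j)
      = (2 ^ n : ℝ≥0∞)⁻¹ + ρ (DD ρ hs Cpart n k \ Cpart j) - (2 ^ n : ℝ≥0∞)⁻¹ := by
        rw [ENNReal.add_sub_cancel_left hfin]
    _ = (2 ^ n : ℝ≥0∞)⁻¹ - (2 ^ n : ℝ≥0∞)⁻¹ := by rw [htotal]
    _ = 0 := tsub_self _

end Cells2



section Counting

variable {C : Type*} [MeasurableSpace C]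
variable (ρ : Measure C) [IsFiniteMeasure ρ] (hs : SierpProp ρ) (Cpart : ℕ → Set C)
variable (hmeas : ∀ j, MeasurableSet (Cpart j))
  (hdisj : Pairwise (Function.onFun Disjoint Cpart))
  (hcover : (⋃ j, Cpart j) = Set.univ)
  (huniv : ρ Set.univ = 1)

/-- cells consistent with outcome j at level n -/
noncomputable def Mset (j n : ℕ) : Finset ℕ :=
  (Finset.Icc 1 (2 ^ n)).filter fun k => ρ (DD ρ hs Cpart n k \ Cpart j) = 0

lemma Mset_subset (j n : ℕ) : Mset ρ hs Cpart j n ⊆ Finset.Icc 1 (2 ^ n) :=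
  Finset.filter_subset _ _

lemma Mset_mem (j n k : ℕ) (hk : k ∈ Mset ρ hs Cpart j n) :
    ρ (DD ρ hs Cpart n k \ Cpart j) = 0 := by
  rw [Mset, Finset.mem_filter] at hk
  exact hk.2

include hmeas hdisj hcover huniv in
lemma count_inter (j n : ℕ) :
    ρ (Cpart j ∩ ⋃ k ∈ Mset ρ hs Cpart j n, DD ρ hs Cpart n k) =
      ((Mset ρ hs Cpart j n).card : ℝ≥0∞) * (2 ^ n : ℝ≥0∞)⁻¹ := by
  rw [Set.inter_iUnion₂, measure_biUnion_finset ?disj ?msb]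
  case disj =>
    intro k hk l hl hkl
    refine Disjoint.mono Set.inter_subset_right Set.inter_subset_right ?_
    exact DD_disj ρ hs Cpart n k (Mset_subset ρ hs Cpart j n hk) l
      (Mset_subset ρ hs Cpart j n hl) hkl
  case msb =>
    exact fun k _ => (hmeas j).inter (DD_meas ρ hs Cpart hmeas n k)
  have heach : ∀ k ∈ Mset ρ hs Cpart j n,
      ρ (Cpart j ∩ DD ρ hs Cpart n k) = (2 ^ n : ℝ≥0∞)⁻¹ := by
    intro k hk
    rw [Mset, Finset.mem_filter] at hk
    have htot := measure_inter_add_diff (μ := ρ) (DD ρ hs Cpart n k) (hmeas j)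
    rw [hk.2, add_zero, DD_measure ρ hs Cpart hmeas hdisj hcover huniv n k hk.1] at htot
    rw [Set.inter_comm]
    exact htot
  rw [Finset.sum_congr rfl heach, Finset.sum_const, nsmul_eq_mul]

include hmeas hdisj hcover huniv in
lemma count_le (j n : ℕ) :
    ((Mset ρ hs Cpart j n).card : ℝ≥0∞) * (2 ^ n : ℝ≥0∞)⁻¹ ≤ pp ρ Cpart j := by
  rw [← count_inter ρ hs Cpart hmeas hdisj hcover huniv j n]
  exact measure_mono Set.inter_subset_left

lemma cast_ofReal_div (m n : ℕ) :
    ((m : ℕ) : ℝ≥0∞) / 2 ^ n = ENNReal.ofReal ((m : ℝ) / 2 ^ n) := by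
  rw [ENNReal.ofReal_div_of_pos (by positivity), ENNReal.ofReal_natCast,
    ENNReal.ofReal_pow (by norm_num), ENNReal.ofReal_ofNat]

include hmeas hdisj hcover huniv in
lemma count_lower (j n : ℕ) :
    2 ^ n * (pp ρ Cpart j).toReal - 2 ≤ ((Mset ρ hs Cpart j n).card : ℝ) := by
  set α := (aa ρ Cpart j).toReal with hα
  set π := (pp ρ Cpart j).toReal with hπ
  have hαnn : 0 ≤ α := ENNReal.toReal_nonneg
  have hπnn : 0 ≤ π := ENNReal.toReal_nonneg
  have hppne : pp ρ Cpart j ≠ ∞ := measure_ne_top ρ _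
  have hsum_eq : (aa ρ Cpart (j + 1)).toReal = α + π := by
    rw [aa_succ, ENNReal.toReal_add (aa_ne_top ρ Cpart j) hppne]
  have hsum_le : α + π ≤ 1 := by
    rw [← hsum_eq]
    have h1 : aa ρ Cpart (j + 1) ≤ 1 :=
      (aa_le_one ρ Cpart hmeas hdisj (j + 1)).trans huniv.le
    have := ENNReal.toReal_mono (by norm_num) h1
    simpa using this
  set A := ⌈(2 ^ n : ℝ) * α⌉₊ with hA
  set B := min ⌊(2 ^ n : ℝ) * (α + π)⌋₊ (2 ^ n - 1) with hB
  have h2npos : (0:ℝ) < 2 ^ n := by positivity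
  have hone : (1:ℕ) ≤ 2 ^ n := Nat.one_le_two_pow
  have hsubset : Finset.Icc (A + 1) B ⊆ Mset ρ hs Cpart j n := by
    intro k hk
    rw [Finset.mem_Icc] at hk
    have hk1 : 1 ≤ k := by omega
    have hk2n : k ≤ 2 ^ n - 1 := le_trans hk.2 (min_le_right _ _)
    have hk2 : k < 2 ^ n := by omega
    rw [Mset, Finset.mem_filter]
    refine ⟨Finset.mem_Icc.mpr ⟨hk1, hk2.le⟩, ?_⟩
    refine DD_pure ρ hs Cpart hmeas hdisj hcover huniv j n k hk1 hk2 ?_ ?_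
    · have hr : α ≤ ((k - 1 : ℕ) : ℝ) / 2 ^ n := by
        rw [le_div_iff₀ h2npos]
        have h1 : (2 ^ n : ℝ) * α ≤ (A : ℝ) := Nat.le_ceil _
        have h2 : (A : ℝ) ≤ ((k - 1 : ℕ) : ℝ) := by
          exact_mod_cast (by omega : A ≤ k - 1)
        calc α * 2 ^ n = (2 ^ n : ℝ) * α := by ring
          _ ≤ (A : ℝ) := h1
          _ ≤ _ := h2
      calc aa ρ Cpart j = ENNReal.ofReal α :=
            (ENNReal.ofReal_toReal (aa_ne_top ρ Cpart j)).symm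
        _ ≤ ENNReal.ofReal (((k - 1 : ℕ) : ℝ) / 2 ^ n) := ENNReal.ofReal_le_ofReal hr
        _ = ((k - 1 : ℕ) : ℝ≥0∞) / 2 ^ n := (cast_ofReal_div _ n).symm
    · have hr : ((k : ℕ) : ℝ) / 2 ^ n ≤ α + π := by
        rw [div_le_iff₀ h2npos]
        have h1 : (k : ℝ) ≤ (⌊(2 ^ n : ℝ) * (α + π)⌋₊ : ℝ) := by
          exact_mod_cast le_trans hk.2 (min_le_left _ _)
        have h2 : (⌊(2 ^ n : ℝ) * (α + π)⌋₊ : ℝ) ≤ (2 ^ n : ℝ) * (α + π) :=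
          Nat.floor_le (by positivity)
        calc (k:ℝ) ≤ (2 ^ n : ℝ) * (α + π) := h1.trans h2
          _ = (α + π) * 2 ^ n := by ring
      calc ((k : ℕ) : ℝ≥0∞) / 2 ^ n = ENNReal.ofReal (((k : ℕ) : ℝ) / 2 ^ n) :=
            cast_ofReal_div _ n
        _ ≤ ENNReal.ofReal (α + π) := ENNReal.ofReal_le_ofReal hr
        _ = ENNReal.ofReal α + ENNReal.ofReal π := ENNReal.ofReal_add hαnn hπnn
        _ = aa ρ Cpart j + pp ρ Cpart j := by
            rw [ENNReal.ofReal_toReal (aa_ne_top ρ Cpart j),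
              ENNReal.ofReal_toReal hppne]
  have hcard : (Finset.Icc (A + 1) B).card ≤ (Mset ρ hs Cpart j n).card :=
    Finset.card_le_card hsubset
  have hIcc : (Finset.Icc (A + 1) B).card = B + 1 - (A + 1) := Nat.card_Icc _ _
  have hBlow : (2 ^ n : ℝ) * (α + π) - 1 ≤ (B : ℝ) := by
    have hb1 : (2 ^ n : ℝ) * (α + π) - 1 ≤ (⌊(2 ^ n : ℝ) * (α + π)⌋₊ : ℝ) := by
      have := Nat.lt_floor_add_one ((2 ^ n : ℝ) * (α + π))
      linarith
    have hb2 : (2 ^ n : ℝ) * (α + π) - 1 ≤ ((2 ^ n - 1 : ℕ) : ℝ) := by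
      have hc : ((2 ^ n - 1 : ℕ) : ℝ) = (2 ^ n : ℝ) - 1 := by
        rw [Nat.cast_sub hone]
        push_cast
        ring
      rw [hc]
      have : (2 ^ n : ℝ) * (α + π) ≤ 2 ^ n * 1 := by
        exact mul_le_mul_of_nonneg_left hsum_le (by positivity)
      linarith
    have hBc : (B : ℝ) = min ((⌊(2 ^ n : ℝ) * (α + π)⌋₊ : ℕ) : ℝ) (((2 ^ n - 1 : ℕ) : ℕ) : ℝ) := by
      rw [hB, Nat.cast_min]
    rw [hBc]
    exact le_min hb1 hb2
  have hAhigh : (A : ℝ) < (2 ^ n : ℝ) * α + 1 :=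
    Nat.ceil_lt_add_one (by positivity)
  have hfinal : 2 ^ n * π - 2 ≤ (B : ℝ) - (A : ℝ) := by
    have : (2 ^ n : ℝ) * (α + π) = 2 ^ n * α + 2 ^ n * π := by ring
    linarith
  have hcast : (B : ℝ) - (A : ℝ) ≤ ((B + 1 - (A + 1) : ℕ) : ℝ) := by
    rcases le_total (A + 1) (B + 1) with h | h
    · rw [Nat.cast_sub h]
      push_cast
      linarith
    · have hz : B + 1 - (A + 1) = 0 := by omega
      rw [hz]
      have : (B : ℝ) ≤ (A : ℝ) := by exact_mod_cast (by omega : B ≤ A)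
      push_cast
      linarith
  calc 2 ^ n * π - 2 ≤ (B : ℝ) - (A : ℝ) := hfinal
    _ ≤ ((B + 1 - (A + 1) : ℕ) : ℝ) := hcast
    _ = ((Finset.Icc (A + 1) B).card : ℝ) := by rw [hIcc]
    _ ≤ ((Mset ρ hs Cpart j n).card : ℝ) := by exact_mod_cast hcard

include hmeas hdisj hcover huniv in
lemma count_tendsto (j : ℕ) :
    Tendsto (fun n => (((Mset ρ hs Cpart j n).card : ℝ)) / 2 ^ n) atTop
      (nhds (pp ρ Cpart j).toReal) := by
  set π := (pp ρ Cpart j).toReal with hπ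
  have hupper : ∀ n, (((Mset ρ hs Cpart j n).card : ℝ)) / 2 ^ n ≤ π := by
    intro n
    have h1 := count_le ρ hs Cpart hmeas hdisj hcover huniv j n
    have h2 := ENNReal.toReal_mono (measure_ne_top ρ _) h1
    rw [ENNReal.toReal_mul, ENNReal.toReal_inv] at h2
    simp only [ENNReal.toReal_natCast, ENNReal.toReal_pow, ENNReal.toReal_ofNat] at h2
    rw [div_eq_mul_inv]
    exact h2
  have hlower : ∀ n, π - 2 / 2 ^ n ≤ (((Mset ρ hs Cpart j n).card : ℝ)) / 2 ^ n := by
    intro n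
    have h1 := count_lower ρ hs Cpart hmeas hdisj hcover huniv j n
    have h2npos : (0:ℝ) < 2 ^ n := by positivity
    rw [le_div_iff₀ h2npos]
    calc (π - 2 / 2 ^ n) * 2 ^ n = 2 ^ n * π - 2 := by field_simp
      _ ≤ _ := h1
  refine tendsto_of_tendsto_of_tendsto_of_le_of_le ?_ tendsto_const_nhds hlower hupper
  have h0 : Tendsto (fun n : ℕ => (2:ℝ) / 2 ^ n) atTop (nhds 0) := by
    have hbase := tendsto_pow_atTop_nhds_zero_of_lt_one
      (by norm_num : (0:ℝ) ≤ 1/2) (by norm_num : (1/2 : ℝ) < 1)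
    have heq : ∀ n : ℕ, (2:ℝ) * (1/2) ^ n = 2 / 2 ^ n := by
      intro n
      rw [one_div, inv_pow]
      ring
    exact Tendsto.congr heq (by simpa using hbase.const_mul (2:ℝ))
  have hfin : Tendsto (fun n : ℕ => π - 2 / 2 ^ n) atTop (nhds (π - 0)) :=
    Tendsto.sub tendsto_const_nhds h0
  simpa using hfin

end Counting


end BornCounting


open BornCounting

/-- Born rule from counting: for a normalized `ψ ∈ L²(C, μ; ℂ)` whose associated measure
`ν(A) = ∫_A |ψ|² dμ` is atomless, and a countable measurable partition `(C_j)` of `C`,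
there are refining partitions of `C` into `2^n` cells of equal weight `2^{-n}` such that,
for each outcome `j`, (a) the fraction of cells consistent with `C_j` converges to the Born
probability `∫_{C_j} |ψ|² dμ`, and (b) the corresponding sum of cell components of `ψ`
converges to `1_{C_j}·ψ` in `L²`. -/
theorem born_rule_from_counting
    {C : Type*} [MeasurableSpace C] (μ : Measure C)
    (ψ : C → ℂ) (hψ : MemLp ψ 2 μ) (hnorm : ∫ x, ‖ψ x‖ ^ 2 ∂μ = 1)
    (ν : Set C → ℝ) (hν : ∀ A : Set C, ν A = ∫ x in A, ‖ψ x‖ ^ 2 ∂μ)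
    (hatomless : ∀ A : Set C, MeasurableSet A → 0 < ν A →
      ∃ B ⊆ A, MeasurableSet B ∧ 0 < ν B ∧ ν B < ν A)
    (Cpart : ℕ → Set C)
    (hCmeas : ∀ j, MeasurableSet (Cpart j))
    (hCdisj : Pairwise (Function.onFun Disjoint Cpart))
    (hCcover : (⋃ j, Cpart j) = Set.univ) :
    ∃ D : ℕ → ℕ → Set C,
      (∀ n, ∀ k ∈ Finset.Icc 1 (2 ^ n), MeasurableSet (D n k)) ∧
      (∀ n, ∀ k ∈ Finset.Icc 1 (2 ^ n), ∀ l ∈ Finset.Icc 1 (2 ^ n), k ≠ l →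
        Disjoint (D n k) (D n l)) ∧
      (∀ n, (⋃ k ∈ Finset.Icc 1 (2 ^ n), D n k) = Set.univ) ∧
      (∀ n, ∀ k ∈ Finset.Icc 1 (2 ^ n), ν (D n k) = (2 ^ n : ℝ)⁻¹) ∧
      (∀ n, ∀ k ∈ Finset.Icc 1 (2 ^ n),
        D n k = D (n + 1) (2 * k - 1) ∪ D (n + 1) (2 * k)) ∧
      ∀ j,
        Tendsto
          (fun n => ((((Finset.Icc 1 (2 ^ n)).filter
              fun k => ν (D n k \ Cpart j) = 0).card : ℝ) / 2 ^ n))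
          atTop (nhds (∫ x in Cpart j, ‖ψ x‖ ^ 2 ∂μ)) ∧
        Tendsto
          (fun n => eLpNorm
            ((fun x => ∑ k ∈ (Finset.Icc 1 (2 ^ n)).filter
                (fun k => ν (D n k \ Cpart j) = 0), (D n k).indicator ψ x)
              - (Cpart j).indicator ψ) 2 μ)
          atTop (nhds 0) := by
  classical
  set w : C → ℝ≥0∞ := fun x => (‖ψ x‖₊ : ℝ≥0∞) ^ 2 with hw
  set ρ : Measure C := μ.withDensity w with hρdef
  have hρ_apply : ∀ A : Set C, MeasurableSet A → ρ A = ∫⁻ x in A, w x ∂μ :=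
    fun A hA => withDensity_apply w hA
  have hAESM : AEStronglyMeasurable ψ μ := hψ.aestronglyMeasurable
  have hsq_aesm : AEStronglyMeasurable (fun x => ‖ψ x‖ ^ 2) μ := by
    have h1 : (fun x => ‖ψ x‖ ^ 2) = fun x => ‖ψ x‖ * ‖ψ x‖ := by
      funext x; ring
    rw [h1]
    exact hAESM.norm.mul hAESM.norm
  have hptw : ∀ x, ENNReal.ofReal (‖ψ x‖ ^ 2) = w x := by
    intro x
    rw [hw, ENNReal.ofReal_pow (norm_nonneg _), ofReal_norm]; rfl
  have hlink : ∀ A : Set C, MeasurableSet A → ν A = (ρ A).toReal := by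
    intro A hA
    rw [hν A, hρ_apply A hA,
      integral_eq_lintegral_of_nonneg_ae
        (Filter.Eventually.of_forall fun x => by positivity) hsq_aesm.restrict]
    congr 1
    exact lintegral_congr fun x => hptw x
  -- finiteness
  have hw_int : ∫⁻ x, w x ∂μ < ∞ := by
    have h2 := hψ.2
    rw [eLpNorm_eq_lintegral_rpow_enorm_toReal (by norm_num) (by norm_num)] at h2
    rw [ENNReal.toReal_ofNat] at h2
    have h3 := (ENNReal.rpow_lt_top_iff_of_pos
      (by norm_num : (0:ℝ) < 1/2)).mp h2
    have h4 : ∀ x, (‖ψ x‖₊ : ℝ≥0∞) ^ (2:ℝ) = w x := by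
      intro x
      rw [hw, show ((2:ℝ)) = ((2:ℕ):ℝ) by norm_num, ENNReal.rpow_natCast]
    calc ∫⁻ x, w x ∂μ = ∫⁻ x, (‖ψ x‖₊ : ℝ≥0∞) ^ (2:ℝ) ∂μ :=
          lintegral_congr fun x => (h4 x).symm
      _ < ∞ := h3
  haveI hρfin : IsFiniteMeasure ρ := by
    constructor
    rw [hρ_apply _ MeasurableSet.univ, Measure.restrict_univ]
    exact hw_int
  have huniv : ρ Set.univ = 1 := by
    have h1 : (ρ Set.univ).toReal = 1 := by
      rw [← hlink _ MeasurableSet.univ, hν, Measure.restrict_univ, hnorm]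
    rw [← ENNReal.ofReal_toReal (measure_ne_top ρ _), h1, ENNReal.ofReal_one]
  -- atomlessness
  have hatρ : AtomlessProp ρ := by
    intro A hA hpos
    have hposν : 0 < ν A := by
      rw [hlink A hA]
      exact ENNReal.toReal_pos hpos.ne' (measure_ne_top ρ A)
    obtain ⟨B, hBA, hBm, hBpos, hBlt⟩ := hatomless A hA hposν
    refine ⟨B, hBA, hBm, ?_, ?_⟩
    · rw [hlink B hBm] at hBpos
      exact (ENNReal.toReal_pos_iff.mp hBpos).1
    · rw [hlink B hBm, hlink A hA] at hBlt
      exact (ENNReal.toReal_lt_toReal (measure_ne_top ρ B) (measure_ne_top ρ A)).mp hBlt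
  have hsρ : SierpProp ρ := sierp ρ hatρ
  refine ⟨DD ρ hsρ Cpart, fun n k _ => DD_meas ρ hsρ Cpart hCmeas n k,
    fun n k hk l hl hne => DD_disj ρ hsρ Cpart n k hk l hl hne,
    DD_cover ρ hsρ Cpart, ?_, fun n k hk => DD_refine ρ hsρ Cpart n k hk, ?_⟩
  · intro n k hk
    rw [hlink _ (DD_meas ρ hsρ Cpart hCmeas n k),
      DD_measure ρ hsρ Cpart hCmeas hCdisj hCcover huniv n k hk,
      ENNReal.toReal_inv]
    norm_num
  · intro j
    have hfilter : ∀ n, (Finset.Icc 1 (2 ^ n)).filter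
        (fun k => ν (DD ρ hsρ Cpart n k \ Cpart j) = 0) = Mset ρ hsρ Cpart j n := by
      intro n
      ext k
      simp only [Mset, Finset.mem_filter]
      have hiff : ν (DD ρ hsρ Cpart n k \ Cpart j) = 0 ↔
          ρ (DD ρ hsρ Cpart n k \ Cpart j) = 0 := by
        rw [hlink _ ((DD_meas ρ hsρ Cpart hCmeas n k).diff (hCmeas j))]
        constructor
        · intro h
          rcases (ENNReal.toReal_eq_zero_iff _).mp h with h0 | htop
          · exact h0
          · exact absurd htop (measure_ne_top ρ _)
        · intro h
          rw [h, ENNReal.toReal_zero]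
      rw [hiff]
    have hcount := count_tendsto ρ hsρ Cpart hCmeas hCdisj hCcover huniv j
    constructor
    · -- part (a)
      have htarget : ∫ x in Cpart j, ‖ψ x‖ ^ 2 ∂μ = (pp ρ Cpart j).toReal := by
        rw [← hν, hlink _ (hCmeas j)]
        rfl
      rw [htarget]
      refine Tendsto.congr (fun n => ?_) hcount
      rw [hfilter n]
    · -- part (b)
      set U : ℕ → Set C := fun n => ⋃ k ∈ Mset ρ hsρ Cpart j n, DD ρ hsρ Cpart n k with hU
      have hUmeas : ∀ n, MeasurableSet (U n) := fun n =>
        (Mset ρ hsρ Cpart j n).measurableSet_biUnion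
          fun k _ => DD_meas ρ hsρ Cpart hCmeas n k
      set S : ℕ → Set C := fun n => (U n \ Cpart j) ∪ (Cpart j \ U n) with hS
      have hSmeas : ∀ n, MeasurableSet (S n) := fun n =>
        ((hUmeas n).diff (hCmeas j)).union ((hCmeas j).diff (hUmeas n))
      -- pointwise sum identity
      have hsum : ∀ n x, (∑ k ∈ Mset ρ hsρ Cpart j n,
          (DD ρ hsρ Cpart n k).indicator ψ x) = (U n).indicator ψ x := by
        intro n x
        by_cases hx : ∃ k ∈ Mset ρ hsρ Cpart j n, x ∈ DD ρ hsρ Cpart n k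
        · obtain ⟨k, hk, hxk⟩ := hx
          have hxU : x ∈ U n := Set.mem_biUnion hk hxk
          rw [Set.indicator_of_mem hxU]
          rw [Finset.sum_eq_single_of_mem k hk ?_]
          · exact Set.indicator_of_mem hxk ψ
          · intro l hl hlk
            refine Set.indicator_of_notMem (fun hxl => ?_) ψ
            exact Set.disjoint_left.mp
              (DD_disj ρ hsρ Cpart n l (Mset_subset ρ hsρ Cpart j n hl) k
                (Mset_subset ρ hsρ Cpart j n hk) hlk) hxl hxk
        · push_neg at hx
          have hxU : x ∉ U n := by
            intro h
            obtain ⟨k, hk, hxk⟩ := Set.mem_iUnion₂.mp h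
            exact hx k hk hxk
          rw [Set.indicator_of_notMem hxU]
          exact Finset.sum_eq_zero fun k hk =>
            Set.indicator_of_notMem (hx k hk) ψ
      -- eLpNorm identity
      have hcalc : ∀ n, eLpNorm
          ((fun x => ∑ k ∈ Mset ρ hsρ Cpart j n,
            (DD ρ hsρ Cpart n k).indicator ψ x) - (Cpart j).indicator ψ) 2 μ
          = (ρ (S n)) ^ (1/2 : ℝ) := by
        intro n
        rw [eLpNorm_eq_lintegral_rpow_enorm_toReal (by norm_num) (by norm_num),
          ENNReal.toReal_ofNat]
        congr 1
        rw [hρ_apply _ (hSmeas n), ← lintegral_indicator (hSmeas n)]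
        refine lintegral_congr fun x => ?_
        have hfx : ((fun x => ∑ k ∈ Mset ρ hsρ Cpart j n,
            (DD ρ hsρ Cpart n k).indicator ψ x) - (Cpart j).indicator ψ) x
            = (U n).indicator ψ x - (Cpart j).indicator ψ x := by
          simp only [Pi.sub_apply]
          rw [hsum n x]
        rw [hfx, show ((2:ℝ)) = ((2:ℕ):ℝ) by norm_num, ENNReal.rpow_natCast]
        by_cases hxU : x ∈ U n <;> by_cases hxC : x ∈ Cpart j
        · have hxS : x ∉ S n := by
            simp [hS, hxU, hxC]
          simp [Set.indicator_of_mem hxU, Set.indicator_of_mem hxC,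
            Set.indicator_of_notMem hxS]
        · have hxS : x ∈ S n := Set.mem_union_left _ ⟨hxU, hxC⟩
          simp [Set.indicator_of_mem hxU, Set.indicator_of_notMem hxC,
            Set.indicator_of_mem hxS, hw]
          rfl
        · have hxS : x ∈ S n := Set.mem_union_right _ ⟨hxC, hxU⟩
          simp [Set.indicator_of_notMem hxU, Set.indicator_of_mem hxC,
            Set.indicator_of_mem hxS, hw]
          rfl
        · have hxS : x ∉ S n := by
            simp [hS, hxU, hxC]
          simp [Set.indicator_of_notMem hxU, Set.indicator_of_notMem hxC,
            Set.indicator_of_notMem hxS]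
      -- measure of S n
      have hUC : ∀ n, ρ (U n \ Cpart j) = 0 := by
        intro n
        have hnull : ρ (⋃ k ∈ Mset ρ hsρ Cpart j n,
            (DD ρ hsρ Cpart n k \ Cpart j)) = 0 := by
          refine (measure_biUnion_null_iff
            (Mset ρ hsρ Cpart j n).countable_toSet).mpr ?_
          intro k hk
          exact Mset_mem ρ hsρ Cpart j n k hk
        refine measure_mono_null ?_ hnull
        rintro x ⟨hxU, hxC⟩
        obtain ⟨k, hk, hxk⟩ := Set.mem_iUnion₂.mp hxU
        exact Set.mem_biUnion hk ⟨hxk, hxC⟩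
      have hCU : ∀ n, ρ (Cpart j \ U n) =
          pp ρ Cpart j - ((Mset ρ hsρ Cpart j n).card : ℝ≥0∞) * (2 ^ n : ℝ≥0∞)⁻¹ := by
        intro n
        have h := measure_inter_add_diff (μ := ρ) (Cpart j) (hUmeas n)
        rw [count_inter ρ hsρ Cpart hCmeas hCdisj hCcover huniv j n] at h
        rw [show pp ρ Cpart j = ρ (Cpart j) from rfl, ← h,
          ENNReal.add_sub_cancel_left]
        exact ENNReal.mul_ne_top (by simp) (by simp)
      set π := (pp ρ Cpart j).toReal with hπ
      have hcardle : ∀ n, ((Mset ρ hsρ Cpart j n).card : ℝ) / 2 ^ n ≤ π := by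
        intro n
        have h1 := count_le ρ hsρ Cpart hCmeas hCdisj hCcover huniv j n
        have h2 := ENNReal.toReal_mono (measure_ne_top ρ _) h1
        rw [ENNReal.toReal_mul, ENNReal.toReal_inv] at h2
        simp only [ENNReal.toReal_natCast, ENNReal.toReal_pow, ENNReal.toReal_ofNat] at h2
        rw [div_eq_mul_inv]
        exact h2
      have hmeaseq : ∀ n, ρ (S n) =
          ENNReal.ofReal (π - ((Mset ρ hsρ Cpart j n).card : ℝ) / 2 ^ n) := by
        intro n
        rw [hS]
        rw [measure_union ?hdisj ((hCmeas j).diff (hUmeas n))]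
        case hdisj => exact disjoint_sdiff_sdiff
        rw [hUC n, zero_add, hCU n]
        have hcle := count_le ρ hsρ Cpart hCmeas hCdisj hCcover huniv j n
        rw [← ENNReal.ofReal_toReal
          (a := pp ρ Cpart j - ((Mset ρ hsρ Cpart j n).card : ℝ≥0∞) * (2 ^ n : ℝ≥0∞)⁻¹)
          (by
            refine ne_of_lt (lt_of_le_of_lt (tsub_le_self) ?_)
            exact measure_lt_top ρ _)]
        congr 1
        rw [ENNReal.toReal_sub_of_le hcle (measure_ne_top ρ _)]
        congr 1
        rw [ENNReal.toReal_mul, ENNReal.toReal_inv]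
        simp only [ENNReal.toReal_natCast, ENNReal.toReal_pow, ENNReal.toReal_ofNat]
        rw [div_eq_mul_inv]
      -- convergence
      have hareal : Tendsto
          (fun n => π - ((Mset ρ hsρ Cpart j n).card : ℝ) / 2 ^ n) atTop (nhds 0) := by
        have hconst : Tendsto (fun _ : ℕ => π) atTop (nhds π) := tendsto_const_nhds
        have := hconst.sub hcount
        simpa using this
      have hmeas0 : Tendsto (fun n => ρ (S n)) atTop (nhds 0) := by
        have h1 : Tendsto (fun n => ENNReal.ofReal
            (π - ((Mset ρ hsρ Cpart j n).card : ℝ) / 2 ^ n)) atTop (nhds 0) := by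
          have := (ENNReal.continuous_ofReal.tendsto 0).comp hareal
          simpa [Function.comp_def] using this
        exact Tendsto.congr (fun n => (hmeaseq n).symm) h1
      have h12 : Tendsto (fun n => (ρ (S n)) ^ (1/2 : ℝ)) atTop (nhds 0) := by
        have := ((ENNReal.continuous_rpow_const (y := 1/2)).tendsto (0:ℝ≥0∞)).comp hmeas0
        simpa [Function.comp_def, ENNReal.zero_rpow_of_pos (by norm_num : (0:ℝ) < 1/2)] using this
      have hgoal : Tendsto (fun n => eLpNorm
          ((fun x => ∑ k ∈ Mset ρ hsρ Cpart j n,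
            (DD ρ hsρ Cpart n k).indicator ψ x) - (Cpart j).indicator ψ) 2 μ)
          atTop (nhds 0) :=
        Tendsto.congr (fun n => (hcalc n).symm) h12
      refine Tendsto.congr (fun n => ?_) hgoal
      rw [hfilter n]
end
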